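/- arXiv:2108.07608 — 4 statements merged into one kernel-verified Lean document; each statement's English description precedes it below -/
import Mathlib

section
/- Let k be a field of characteristic p > 0 and let G be a finite p-group (a finite group whose order is a power of p). Then the augmentation ideal of the group algebra k[G] (the kernel of the augmentation map k[G] → k sending each group element to 1) is a nilpotent ideal. -/
/-- The augmentation ideal of the group algebra `k[G]`: the kernel of the
`k`-algebra homomorphism `k[G] → k` sending every group element to `1`. -/
noncomputable def augmentationIdeal (k : Type*) [Field k] (G : Type*) [Group G] :
    Ideal (MonoidAlgebra k G) :=
  RingHom.ker (MonoidAlgebra.lift k k G (1 : G →* k))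

open MonoidAlgebra Finsupp

section Helpers

variable {R : Type*} {A : Type*} [CommSemiring R] [Semiring A] [Algebra R A]

lemma aux_pow_le_pow {S T : Submodule R A} (h : S ≤ T) : ∀ e, S ^ e ≤ T ^ e := by
  intro e
  induction e with
  | zero => simp
  | succ e ih => rw [pow_succ, pow_succ]; exact mul_le_mul' ih h

end Helpers

section Aug

variable (k : Type*) [Field k] {G : Type*} [Group G]

lemma aux_aug_apply (x : MonoidAlgebra k G) :
    MonoidAlgebra.lift k k G (1 : G →* k) x = x.coeff.sum fun _ c => c := by
  rw [MonoidAlgebra.lift_apply]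
  simp

lemma aux_smul_of (g : G) (c : k) :
    c • (MonoidAlgebra.of k G g : MonoidAlgebra k G) = MonoidAlgebra.single g c := by
  rw [MonoidAlgebra.of_apply, MonoidAlgebra.smul_single, smul_eq_mul, mul_one]

lemma aux_aug_le_span :
    (augmentationIdeal k G).restrictScalars k ≤
      Submodule.span k (Set.range fun g : G => (MonoidAlgebra.of k G g : MonoidAlgebra k G) - 1) := by
  intro x hx
  have hx0 : x.coeff.sum (fun _ c => c) = 0 := by
    have := RingHom.mem_ker.mp (by exact hx : x ∈ RingHom.ker (MonoidAlgebra.lift k k G (1 : G →* k)))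
    rwa [aux_aug_apply] at this
  have hxx : x = x.coeff.sum fun g c => c • ((MonoidAlgebra.of k G g : MonoidAlgebra k G) - 1) := by
    have : (x.coeff.sum fun g c => c • ((MonoidAlgebra.of k G g : MonoidAlgebra k G) - 1))
        = (x.coeff.sum fun g c => MonoidAlgebra.single g c) - (x.coeff.sum fun _ c => c) • (1 : MonoidAlgebra k G) := by
      rw [Finsupp.sum, Finsupp.sum, Finsupp.sum, Finset.sum_smul]
      rw [← Finset.sum_sub_distrib]
      congr 1
      ext g
      rw [smul_sub, aux_smul_of]
    rw [this, hx0, zero_smul, sub_zero, MonoidAlgebra.sum_coeff_single]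
  rw [hxx]
  exact Submodule.sum_mem _ fun g _ =>
    Submodule.smul_mem _ _ (Submodule.subset_span ⟨g, rfl⟩)

end Aug

section Main

variable (k : Type*) [Field k] (p : ℕ) [Fact p.Prime] [CharP k p]

lemma aux_key : ∀ (n : ℕ) (G : Type _) [Group G] [Finite G], Nat.card G ≤ n → IsPGroup p G →
    IsNilpotent ((augmentationIdeal k G).restrictScalars k) := by
  intro n
  induction n with
  | zero =>
    intro G _ _ hcard _
    exact absurd hcard (by simpa using Nat.card_pos.ne')
  | succ n ih =>
    intro G _ _ hcard hG
    by_cases hT : Subsingleton G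
    · refine ⟨1, ?_⟩
      rw [pow_one]
      have hle := aux_aug_le_span k (G := G)
      have : (Set.range fun g : G => (MonoidAlgebra.of k G g : MonoidAlgebra k G) - 1) = {0} := by
        ext x
        constructor
        · rintro ⟨g, rfl⟩
          have : g = 1 := Subsingleton.elim g 1
          simp [this, MonoidAlgebra.one_def]
        · rintro rfl
          exact ⟨1, by simp [MonoidAlgebra.one_def]⟩
      rw [this] at hle
      simpa using le_antisymm (hle.trans (by simp)) bot_le
    · have : Nontrivial G := not_subsingleton_iff_nontrivial.mp hT
      have hcnt := hG.center_nontrivial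
      obtain ⟨z, hz1⟩ := exists_ne (1 : Subgroup.center G)
      set zg : G := (z : G) with hzgdef
      have hzg : zg ∈ Subgroup.center G := z.2
      have hzgne : zg ≠ 1 := fun h => hz1 (Subtype.ext h)
      set N := Subgroup.zpowers zg with hNdef
      haveI hNnormal : N.Normal := by
        constructor
        intro m hm g
        have hmc : m ∈ Subgroup.center G := (Subgroup.zpowers_le.mpr hzg) hm
        have hgm : g * m = m * g := Subgroup.mem_center_iff.mp hmc g
        rw [show g * m * g⁻¹ = m by rw [hgm, mul_assoc, mul_inv_cancel, mul_one]]
        exact hm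
      -- the quotient group
      haveI : Finite (G ⧸ N) := Quotient.finite _
      have hQp : IsPGroup p (G ⧸ N) := hG.to_quotient N
      have hQcard : Nat.card (G ⧸ N) ≤ n := by
        have h1 : Nat.card G = Nat.card (G ⧸ N) * Nat.card N :=
          Subgroup.card_eq_card_quotient_mul_card_subgroup N
        have hNnt : Nontrivial N :=
          ⟨⟨zg, Subgroup.mem_zpowers zg⟩, 1, fun h => hzgne (by simpa using congrArg Subtype.val h)⟩
        have hN2 : 2 ≤ Nat.card N := Finite.one_lt_card_iff_nontrivial.mpr hNnt
        have h2 : Nat.card (G ⧸ N) * 2 ≤ Nat.card (G ⧸ N) * Nat.card N :=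
          Nat.mul_le_mul_left _ hN2
        have h3 : 0 < Nat.card (G ⧸ N) := Nat.card_pos
        omega
      obtain ⟨m, hm⟩ := ih (G ⧸ N) hQcard hQp
      set π : MonoidAlgebra k G →ₐ[k] MonoidAlgebra k (G ⧸ N) :=
        MonoidAlgebra.mapDomainAlgHom k k (QuotientGroup.mk' N) with hπdef
      have haug : ∀ x ∈ augmentationIdeal k G, π x ∈ augmentationIdeal k (G ⧸ N) := by
        intro x hx
        rw [augmentationIdeal, RingHom.mem_ker] at hx ⊢
        have hcomp : ((MonoidAlgebra.lift k k (G ⧸ N) (1 : (G ⧸ N) →* k)).comp π) x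
            = MonoidAlgebra.lift k k G (1 : G →* k) x := by
          refine DFunLike.congr_fun (MonoidAlgebra.algHom_ext (fun a => ?_) (Subsingleton.elim _ _)) x
          simp [hπdef]
        calc (MonoidAlgebra.lift k k (G ⧸ N) (1 : (G ⧸ N) →* k)) (π x)
            = ((MonoidAlgebra.lift k k (G ⧸ N) (1 : (G ⧸ N) →* k)).comp π) x := rfl
          _ = (MonoidAlgebra.lift k k G (1 : G →* k)) x := hcomp
          _ = 0 := hx
      set I : Submodule k (MonoidAlgebra k G) := (augmentationIdeal k G).restrictScalars k with hIdef
      set IQ : Submodule k (MonoidAlgebra k (G ⧸ N)) :=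
        (augmentationIdeal k (G ⧸ N)).restrictScalars k with hIQdef
      have hmapI : Submodule.map π.toLinearMap I ≤ IQ :=
        Submodule.map_le_iff_le_comap.mpr fun x hx => haug x hx
      have hpow0 : ∀ x ∈ I ^ (m + 1), π x = 0 := by
        intro x hx
        have h1 : π x ∈ Submodule.map π.toLinearMap (I ^ (m + 1)) := ⟨x, hx, rfl⟩
        rw [Submodule.map_pow] at h1
        have h2 := aux_pow_le_pow hmapI (m + 1) h1
        have h3 : IQ ^ (m + 1) = ⊥ := by
          rw [pow_succ, hm, Submodule.zero_eq_bot, Submodule.bot_mul]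
        rw [h3] at h2
        simpa using h2
      -- the central nilpotent element
      have hcomm1 : ∀ x : MonoidAlgebra k G, Commute (MonoidAlgebra.of k G zg : MonoidAlgebra k G) x := by
        intro x
        induction x using MonoidAlgebra.induction_linear with
        | zero => exact Commute.zero_right _
        | add f g hf hg => exact Commute.add_right hf hg
        | single a b =>
          show _ * _ = _ * _
          rw [MonoidAlgebra.of_apply, MonoidAlgebra.single_mul_single,
            MonoidAlgebra.single_mul_single, one_mul, mul_one,
            Subgroup.mem_center_iff.mp hzg a]
      set c : MonoidAlgebra k G := MonoidAlgebra.of k G zg - 1 with hcdef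
      have hcomm : ∀ x : MonoidAlgebra k G, Commute c x := fun x =>
        Commute.sub_left (hcomm1 x) (Commute.one_left x)
      have hinj : Function.Injective (algebraMap k (MonoidAlgebra k G)) := by
        intro a b h
        have := congrArg (MonoidAlgebra.lift k k G (1 : G →* k)) h
        simpa using this
      haveI : CharP (MonoidAlgebra k G) p := charP_of_injective_algebraMap hinj p
      obtain ⟨t, ht⟩ := hG zg
      have hce : c ^ p ^ t = 0 := by
        rw [hcdef, sub_pow_char_pow_of_commute p t (Commute.one_right _), one_pow,
          ← map_pow, ht, map_one, sub_self]
      set J : Submodule k (MonoidAlgebra k G) := LinearMap.range (LinearMap.mulLeft k c) with hJdef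
      have hJpow : ∀ e : ℕ, J ^ (e + 1) ≤ LinearMap.range (LinearMap.mulLeft k (c ^ (e + 1))) := by
        intro e
        induction e with
        | zero => rw [pow_one, pow_one]
        | succ e ih =>
          rw [pow_succ]
          refine Submodule.mul_le.mpr fun x hx y hy => ?_
          obtain ⟨a, rfl⟩ := ih hx
          obtain ⟨b, rfl⟩ := hy
          refine ⟨a * b, ?_⟩
          simp only [LinearMap.mulLeft_apply]
          have hac : a * c = c * a := (hcomm a).symm
          rw [mul_assoc (c ^ (e + 1)) a, ← mul_assoc a c b, hac, mul_assoc c a b,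
            ← mul_assoc (c ^ (e + 1)) c, ← pow_succ]
      have hJbot : J ^ p ^ t ≤ ⊥ := by
        have he : p ^ t = (p ^ t - 1) + 1 :=
          (Nat.succ_pred_eq_of_pos (pow_pos (Nat.Prime.pos Fact.out) t)).symm
        rw [he]
        refine le_trans (hJpow (p ^ t - 1)) ?_
        rw [← he, hce, LinearMap.mulLeft_zero_eq_zero]
        rintro x ⟨a, rfl⟩
        simp
      -- kernel of π is contained in J
      classical
      have hker : ∀ x : MonoidAlgebra k G, π x = 0 → x ∈ J := by
        intro x hx
        set f : G → G := fun g => (QuotientGroup.mk g : G ⧸ N).out with hfdef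
        have hterm : ∀ g : G,
            (MonoidAlgebra.of k G g : MonoidAlgebra k G) - MonoidAlgebra.of k G (f g) ∈ J := by
          intro g
          have hmk : (QuotientGroup.mk (f g) : G ⧸ N) = QuotientGroup.mk g := Quotient.out_eq' _
          have hn : (f g)⁻¹ * g ∈ N := QuotientGroup.eq.mp hmk
          obtain ⟨j, hj⟩ : (f g)⁻¹ * g ∈ Submonoid.powers zg := by
            rw [mem_powers_iff_mem_zpowers]; exact hn
          have hng : f g * ((f g)⁻¹ * g) = g := by group
          have hofn : (MonoidAlgebra.of k G ((f g)⁻¹ * g) : MonoidAlgebra k G) - 1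
              = c * ∑ i ∈ Finset.range j, (MonoidAlgebra.of k G zg : MonoidAlgebra k G) ^ i := by
            rw [← hj, map_pow, hcdef, mul_geom_sum]
          have hsplit : (MonoidAlgebra.of k G g : MonoidAlgebra k G) - MonoidAlgebra.of k G (f g)
              = MonoidAlgebra.of k G (f g) * ((MonoidAlgebra.of k G ((f g)⁻¹ * g) : MonoidAlgebra k G) - 1) := by
            rw [mul_sub, mul_one, ← map_mul, hng]
          rw [hsplit, hofn]
          refine ⟨MonoidAlgebra.of k G (f g) * ∑ i ∈ Finset.range j, (MonoidAlgebra.of k G zg : MonoidAlgebra k G) ^ i, ?_⟩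
          rw [LinearMap.mulLeft_apply, ← mul_assoc, hcomm (MonoidAlgebra.of k G (f g)), mul_assoc]
        have hmap0 : Finsupp.mapDomain f x.coeff = 0 := by
          have hfeq : f = Quotient.out ∘ (QuotientGroup.mk : G → G ⧸ N) := rfl
          have hπx : Finsupp.mapDomain (QuotientGroup.mk : G → G ⧸ N) x.coeff = 0 := congrArg MonoidAlgebra.coeff hx
          rw [hfeq, Finsupp.mapDomain_comp, hπx, Finsupp.mapDomain_zero]
        have h1 : (∑ g ∈ x.coeff.support, x.coeff g • (MonoidAlgebra.of k G g : MonoidAlgebra k G)) = x := by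
          conv_rhs => rw [← MonoidAlgebra.sum_coeff_single x]
          rw [Finsupp.sum]
          exact Finset.sum_congr rfl fun g _ => aux_smul_of k g (x.coeff g)
        have h2 : (∑ g ∈ x.coeff.support, x.coeff g • (MonoidAlgebra.of k G (f g) : MonoidAlgebra k G)) = 0 := by
          rw [← MonoidAlgebra.ofCoeff_zero, ← hmap0, Finsupp.mapDomain, Finsupp.sum, MonoidAlgebra.ofCoeff_sum]
          exact Finset.sum_congr rfl fun g _ => by
            rw [aux_smul_of, MonoidAlgebra.ofCoeff_single]
        have hxid : x = ∑ g ∈ x.coeff.support,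
            x.coeff g • ((MonoidAlgebra.of k G g : MonoidAlgebra k G) - MonoidAlgebra.of k G (f g)) := by
          calc x = (∑ g ∈ x.coeff.support, x.coeff g • (MonoidAlgebra.of k G g : MonoidAlgebra k G))
                - (∑ g ∈ x.coeff.support, x.coeff g • (MonoidAlgebra.of k G (f g) : MonoidAlgebra k G)) := by
                  rw [h1, h2, sub_zero]
            _ = _ := by rw [← Finset.sum_sub_distrib]; exact Finset.sum_congr rfl fun g _ => (smul_sub _ _ _).symm
        rw [hxid]
        exact Submodule.sum_mem _ fun g _ => Submodule.smul_mem _ _ (hterm g)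
      refine ⟨(m + 1) * p ^ t, ?_⟩
      have h2 : I ^ (m + 1) ≤ J := fun x hx => hker x (hpow0 x hx)
      have h3 := aux_pow_le_pow h2 (p ^ t)
      rw [pow_mul, Submodule.zero_eq_bot]
      exact le_antisymm (le_trans h3 hJbot) bot_le

end Main

/-- If `k` is a field of characteristic `p > 0` and `G` is a finite `p`-group,
then the augmentation ideal of `k[G]` is a nilpotent ideal (here viewed as a
`k`-submodule of `k[G]`, with the multiplication of submodules; since it is a
two-sided ideal, its submodule powers agree with its ideal powers). -/
theorem augmentationIdeal_isNilpotent (k : Type*) [Field k] (p : ℕ) [Fact p.Prime]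
    [CharP k p] (G : Type*) [Group G] [Finite G] (hG : IsPGroup p G) :
    IsNilpotent ((augmentationIdeal k G).restrictScalars k) := by
  exact aux_key k p (Nat.card G) G le_rfl hG
end

section
/- Let Λ be a complete noetherian local ring whose residue field has characteristic p > 0, and let G be a finite p-group. Then the group algebra Λ[G] is a local ring. -/
open MonoidAlgebra Finset

namespace MonoidAlgebraLocalAux

variable {Λ : Type*} [CommRing Λ] {G : Type*} [Group G]

/-- The submodule of elements of the monoid algebra all of whose coefficients lie in `I`. -/
def coeffIn (G : Type*) [Group G] (I : Ideal Λ) : Submodule Λ (MonoidAlgebra Λ G) where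
  carrier := {x | ∀ g : G, x.coeff g ∈ I}
  add_mem' hx hy g := by rw [MonoidAlgebra.coeff_add, Finsupp.add_apply]; exact add_mem (hx g) (hy g)
  zero_mem' g := by simp
  smul_mem' c x hx g := by
    rw [MonoidAlgebra.coeff_smul, Finsupp.smul_apply, smul_eq_mul]; exact Ideal.mul_mem_left _ _ (hx g)

lemma mem_coeffIn {I : Ideal Λ} {x : MonoidAlgebra Λ G} :
    x ∈ coeffIn G I ↔ ∀ g, x.coeff g ∈ I := Iff.rfl

lemma coeffIn_mul_mem {I J : Ideal Λ} {x y : MonoidAlgebra Λ G}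
    (hx : x ∈ coeffIn G I) (hy : y ∈ coeffIn G J) : x * y ∈ coeffIn G (I * J) := by
  classical
  intro g
  rw [MonoidAlgebra.mul_apply]
  refine Submodule.sum_mem _ fun a _ => Submodule.sum_mem _ fun b _ => ?_
  dsimp only
  split_ifs
  · exact Ideal.mul_mem_mul (hx a) (hy b)
  · exact zero_mem _

lemma coeffIn_mul_left {I : Ideal Λ} {y : MonoidAlgebra Λ G}
    (x : MonoidAlgebra Λ G) (hy : y ∈ coeffIn G I) : x * y ∈ coeffIn G I := by
  classical
  intro g
  rw [MonoidAlgebra.mul_apply]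
  refine Submodule.sum_mem _ fun a _ => Submodule.sum_mem _ fun b _ => ?_
  dsimp only
  split_ifs
  · exact Ideal.mul_mem_left _ _ (hy b)
  · exact zero_mem _

lemma coeffIn_mul_right {I : Ideal Λ} {x : MonoidAlgebra Λ G}
    (hx : x ∈ coeffIn G I) (y : MonoidAlgebra Λ G) : x * y ∈ coeffIn G I := by
  classical
  intro g
  rw [MonoidAlgebra.mul_apply]
  refine Submodule.sum_mem _ fun a _ => Submodule.sum_mem _ fun b _ => ?_
  dsimp only
  split_ifs
  · exact Ideal.mul_mem_right _ _ (hx a)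
  · exact zero_mem _

/-- The augmentation submodule, spanned by the elements `g - 1`. -/
noncomputable def augS (Λ G : Type*) [CommRing Λ] [Group G] : Submodule Λ (MonoidAlgebra Λ G) :=
  Submodule.span Λ (Set.range fun g : G => (MonoidAlgebra.single g 1 - 1 : MonoidAlgebra Λ G))

lemma pow_le_pow_of_le {A : Type*} [Semiring A] [Algebra Λ A]
    {M N : Submodule Λ A} (h : M ≤ N) (n : ℕ) : M ^ n ≤ N ^ n := by
  induction n with
  | zero => simp
  | succ n ih => rw [pow_succ, pow_succ]; exact mul_le_mul' ih h


lemma commute_single_center {z : G} (hz : z ∈ Subgroup.center G)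
    (w : MonoidAlgebra Λ G) : Commute (MonoidAlgebra.single z (1:Λ)) w := by
  induction w using MonoidAlgebra.induction_linear with
  | zero => exact Commute.zero_right _
  | add f g hf hg => exact hf.add_right hg
  | single g a =>
    show _ * _ = _ * _
    rw [MonoidAlgebra.single_mul_single, MonoidAlgebra.single_mul_single, one_mul, mul_one,
      (Subgroup.mem_center_iff.mp hz g)]

lemma sub_one_pow_prime_mem {p : ℕ} (hp : p.Prime) {m : Ideal Λ} (hpm : (p : Λ) ∈ m)
    {z : G} (hzp : z ^ p = 1) :
    ((MonoidAlgebra.single z (1:Λ)) - 1) ^ p ∈ coeffIn G m := by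
  classical
  set z' : MonoidAlgebra Λ G := MonoidAlgebra.single z 1 with hz'
  have hnat : ∀ n : ℕ, p ∣ n → ((n : ℕ) : MonoidAlgebra Λ G) ∈ coeffIn G m := by
    rintro n ⟨c, rfl⟩
    intro g
    rw [MonoidAlgebra.coeff_natCast, Finsupp.single_apply]
    split_ifs
    · push_cast
      exact Ideal.mul_mem_right _ _ hpm
    · exact zero_mem _
  have hz'p : z' ^ p = 1 := by
    rw [hz', MonoidAlgebra.single_pow, hzp, one_pow, MonoidAlgebra.one_def]
  have hcomm : Commute z' (-1 : MonoidAlgebra Λ G) := (Commute.one_right z').neg_right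
  have hexp := hcomm.add_pow p
  rw [← sub_eq_add_neg] at hexp
  rw [hexp]
  rw [Finset.sum_range_succ, Finset.range_eq_Ico,
    Finset.sum_eq_sum_Ico_succ_bot hp.pos]
  have ht0 : z' ^ 0 * (-1 : MonoidAlgebra Λ G) ^ (p - 0) * (Nat.choose p 0 : MonoidAlgebra Λ G)
      = (-1) ^ p := by simp
  have htp : z' ^ p * (-1 : MonoidAlgebra Λ G) ^ (p - p) * (Nat.choose p p : MonoidAlgebra Λ G)
      = 1 := by simp [hz'p]
  rw [ht0, htp]
  have hmid : (∑ i ∈ Finset.Ico 1 p,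
      z' ^ i * (-1 : MonoidAlgebra Λ G) ^ (p - i) * (Nat.choose p i : MonoidAlgebra Λ G))
      ∈ coeffIn G m := by
    refine Submodule.sum_mem _ fun i hi => ?_
    rw [Finset.mem_Ico] at hi
    exact coeffIn_mul_left _ (hnat _ (hp.dvd_choose_self (by omega) hi.2))
  have h1p : ((-1 : MonoidAlgebra Λ G) ^ p + 1) ∈ coeffIn G m := by
    rcases hp.eq_two_or_odd' with h2 | hodd
    · subst h2
      norm_num
      exact hnat 2 dvd_rfl
    · rw [hodd.neg_one_pow]
      simp
  have : (-1 : MonoidAlgebra Λ G) ^ p + (∑ i ∈ Finset.Ico 1 p,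
      z' ^ i * (-1 : MonoidAlgebra Λ G) ^ (p - i) * (Nat.choose p i : MonoidAlgebra Λ G)) + 1
      = ((-1 : MonoidAlgebra Λ G) ^ p + 1) + (∑ i ∈ Finset.Ico 1 p,
      z' ^ i * (-1 : MonoidAlgebra Λ G) ^ (p - i) * (Nat.choose p i : MonoidAlgebra Λ G)) := by
    abel
  rw [this]
  exact add_mem h1p hmid


lemma aug_pow_le {p : ℕ} (hp : p.Prime) (m : Ideal Λ) (hpm : (p : Λ) ∈ m) :
    ∀ (n : ℕ) (G : Type u_2) [Group G] [Finite G], Nat.card G = n → IsPGroup p G →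
      ∃ N : ℕ, 0 < N ∧ augS Λ G ^ N ≤ coeffIn G m := by
  intro n
  induction n using Nat.strong_induction_on with
  | _ n IH =>
    intro G _ _ hcard hG
    classical
    by_cases h1 : Nat.card G = 1
    · -- trivial group
      refine ⟨1, one_pos, ?_⟩
      rw [pow_one, augS, Submodule.span_le]
      rintro _ ⟨g, rfl⟩
      have hsub : Subsingleton G := Nat.card_eq_one_iff_unique.mp h1 |>.1
      have hgone : g = 1 := Subsingleton.elim g 1
      show (MonoidAlgebra.single g (1:Λ) - 1 : MonoidAlgebra Λ G) ∈ (coeffIn G m : Set _)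
      rw [hgone, ← MonoidAlgebra.one_def, sub_self]
      exact zero_mem _
    · haveI : Nontrivial G := by
        have h0 : Nat.card G ≠ 0 := Nat.card_ne_zero.mpr ⟨inferInstance, inferInstance⟩
        exact Finite.one_lt_card_iff_nontrivial.mp (by omega)
      haveI : Fact p.Prime := ⟨hp⟩
      -- find a central element of order p
      haveI hcnt : Nontrivial (Subgroup.center G) := hG.center_nontrivial
      have hcenter : IsPGroup p (Subgroup.center G) := hG.to_subgroup _
      obtain ⟨k, hk⟩ := IsPGroup.iff_card.mp hcenter
      have hk1 : 1 ≤ k := by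
        rcases Nat.eq_zero_or_pos k with rfl | h
        · exfalso
          rw [pow_zero] at hk
          exact (Finite.one_lt_card_iff_nontrivial.mpr hcnt).ne' hk
        · exact h
      have hdvd : p ∣ Nat.card (Subgroup.center G) := by
        rw [hk]
        exact dvd_pow_self p (by omega)
      obtain ⟨c, hc⟩ := exists_prime_orderOf_dvd_card' p hdvd
      set z : G := (c : G) with hzdef
      have hzc : z ∈ Subgroup.center G := c.2
      have hzord : orderOf z = p := by rw [hzdef, Subgroup.orderOf_coe, hc]
      have hzp : z ^ p = 1 := by rw [← hzord]; exact pow_orderOf_eq_one z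
      set Z : Subgroup G := Subgroup.zpowers z with hZdef
      haveI hZn : Z.Normal := by
        constructor
        intro a ha g
        obtain ⟨j, rfl⟩ := Subgroup.mem_zpowers_iff.mp ha
        have hzjc : z ^ j ∈ Subgroup.center G := Subgroup.zpow_mem _ hzc j
        have h2 : g * z ^ j * g⁻¹ = z ^ j := by
          rw [Subgroup.mem_center_iff.mp hzjc g, mul_inv_cancel_right]
        rw [h2]
        exact ha
      set Q := G ⧸ Z with hQdef
      have hcardZ : Nat.card Z = p := by rw [hZdef, Nat.card_zpowers, hzord]
      have hcardQ : Nat.card Q < n := by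
        have hQG := Subgroup.card_eq_card_quotient_mul_card_subgroup Z
        rw [hcardZ] at hQG
        have hQpos : 0 < Nat.card Q := Nat.card_pos
        rw [← hcard, hQG]
        nlinarith [hp.one_lt]
      obtain ⟨M, hM0, hMle⟩ := IH (Nat.card Q) hcardQ Q rfl (hG.to_quotient Z)
      -- the projection and section
      set π : MonoidAlgebra Λ G →ₐ[Λ] MonoidAlgebra Λ Q :=
        MonoidAlgebra.mapDomainAlgHom Λ Λ (QuotientGroup.mk' Z) with hπdef
      have hπ_single : ∀ (g : G) (a : Λ),
          π (MonoidAlgebra.single g a) = MonoidAlgebra.single (g : Q) a := by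
        intro g a
        show MonoidAlgebra.mapDomain _ _ = _
        rw [MonoidAlgebra.mapDomain_single]
        rfl
      set S : MonoidAlgebra Λ Q →ₗ[Λ] MonoidAlgebra Λ G :=
        MonoidAlgebra.mapDomainLinearMap Λ Λ (Quotient.out : Q → G) with hSdef
      have hout : Function.Injective (Quotient.out : Q → G) := by
        intro a b h
        rw [← Quotient.out_eq' a, ← Quotient.out_eq' b, h]
      have hS_single : ∀ (q : Q) (a : Λ),
          S (MonoidAlgebra.single q a) = MonoidAlgebra.single (Quotient.out q) a := by
        intro q a
        rw [hSdef, MonoidAlgebra.mapDomainLinearMap_single]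
      -- map of augmentation
      have hπaug : Submodule.map π.toLinearMap (augS Λ G) ≤ augS Λ Q := by
        rw [augS, Submodule.map_span, Submodule.span_le]
        rintro _ ⟨_, ⟨g, rfl⟩, rfl⟩
        show π (MonoidAlgebra.single g 1 - 1) ∈ augS Λ Q
        rw [map_sub, map_one, hπ_single]
        exact Submodule.subset_span ⟨(g : Q), rfl⟩
      have hπpow : ∀ x ∈ augS Λ G ^ M, π x ∈ coeffIn Q m := by
        intro x hx
        have h1 : π x ∈ Submodule.map π.toLinearMap (augS Λ G ^ M) :=
          Submodule.mem_map_of_mem hx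
        rw [Submodule.map_pow] at h1
        exact hMle (pow_le_pow_of_le hπaug M h1)
      -- the central element in the group algebra
      set z' : MonoidAlgebra Λ G := MonoidAlgebra.single z 1 with hz'def
      set Zr : ℕ → Submodule Λ (MonoidAlgebra Λ G) :=
        fun j => LinearMap.range (LinearMap.mulRight Λ ((z' - 1) ^ j)) with hZrdef
      have hZr_mem : ∀ (j : ℕ) (w : MonoidAlgebra Λ G), w * (z' - 1) ^ j ∈ Zr j :=
        fun j w => ⟨w, rfl⟩
      have hcommz : ∀ w : MonoidAlgebra Λ G, Commute (z' - 1) w := by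
        intro w
        rw [hz'def]
        exact (commute_single_center hzc w).sub_left (Commute.one_left w)
      -- the section property
      have hSπ : ∀ x : MonoidAlgebra Λ G, x - S (π x) ∈ Zr 1 := by
        intro x
        induction x using MonoidAlgebra.induction_on with
        | of g =>
          rw [MonoidAlgebra.of_apply, hπ_single, hS_single]
          set g' : G := Quotient.out ((g : Q)) with hg'def
          have hgg' : ((g' : G) : Q) = (g : Q) := by
            rw [hg'def]
            exact Quotient.out_eq' _
          have hmem : g'⁻¹ * g ∈ Z := by
            rw [← QuotientGroup.eq]
            exact hgg'
          obtain ⟨nn, hnn⟩ := Submonoid.mem_powers_iff _ _ |>.mp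
            (mem_powers_iff_mem_zpowers.mpr hmem)
          have hg : g = g' * z ^ nn := by rw [hnn, mul_inv_cancel_left]
          have hsingle_eq : MonoidAlgebra.single g (1:Λ)
              = MonoidAlgebra.single g' (1:Λ) * z' ^ nn := by
            rw [hz'def, MonoidAlgebra.single_pow, one_pow,
              MonoidAlgebra.single_mul_single, mul_one, hg]
          have heq : MonoidAlgebra.single g (1:Λ) - MonoidAlgebra.single g' (1:Λ)
              = (MonoidAlgebra.single g' (1:Λ) * (∑ i ∈ Finset.range nn, z' ^ i))
                * (z' - 1) ^ 1 := by
            calc MonoidAlgebra.single g (1:Λ) - MonoidAlgebra.single g' (1:Λ)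
                = MonoidAlgebra.single g' (1:Λ) * z' ^ nn
                  - MonoidAlgebra.single g' (1:Λ) := by rw [hsingle_eq]
              _ = _ := by rw [pow_one, mul_assoc, geom_sum_mul, mul_sub, mul_one]
          rw [heq]
          exact hZr_mem 1 _
        | add f g hf hg =>
          rw [map_add, map_add, ← sub_add_sub_comm]
          exact add_mem hf hg
        | smul r f hf =>
          rw [map_smul, map_smul, ← smul_sub]
          exact Submodule.smul_mem _ r hf
      have hS_coeff : ∀ v ∈ coeffIn Q m, S v ∈ coeffIn G m := by
        intro v hv g
        by_cases hg : g ∈ Set.range (Quotient.out : Q → G)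
        · obtain ⟨q, rfl⟩ := hg
          show (Finsupp.mapDomain _ v.coeff) _ ∈ m
          rw [Finsupp.mapDomain_apply hout]
          exact hv q
        · show (Finsupp.mapDomain _ v.coeff) _ ∈ m
          rw [Finsupp.mapDomain_notin_range _ _ hg]
          exact zero_mem _
      -- augS^M ≤ coeffIn m ⊔ Zr 1
      have hKle : augS Λ G ^ M ≤ coeffIn G m ⊔ Zr 1 := by
        intro x hx
        have hx1 : S (π x) ∈ coeffIn G m := hS_coeff _ (hπpow x hx)
        have hx2 : x - S (π x) ∈ Zr 1 := hSπ x
        have hxeq : x = S (π x) + (x - S (π x)) := by abel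
        rw [hxeq]
        exact Submodule.add_mem_sup hx1 hx2
      -- powers of K
      have hKpow : ∀ j : ℕ, (coeffIn G m ⊔ Zr 1) ^ (j + 1) ≤ coeffIn G m ⊔ Zr (j + 1) := by
        intro j
        induction j with
        | zero => rw [pow_one]
        | succ j ihj =>
          rw [pow_succ]
          refine Submodule.mul_le.mpr fun u hu v hv => ?_
          have hu' := ihj hu
          obtain ⟨cu, hcu, wu, hwu, rfl⟩ := Submodule.mem_sup.mp hu'
          obtain ⟨cv, hcv, wv, hwv, rfl⟩ := Submodule.mem_sup.mp hv
          obtain ⟨u₁, rfl⟩ := hwu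
          obtain ⟨u₂, rfl⟩ := hwv
          simp only [LinearMap.mulRight_apply]
          have hcom : Commute ((z' - 1) ^ (j + 1)) u₂ := (hcommz u₂).pow_left (j + 1)
          have hprod : u₁ * (z' - 1) ^ (j + 1) * (u₂ * (z' - 1) ^ 1)
              = (u₁ * u₂) * (z' - 1) ^ (j + 1 + 1) := by
            rw [hcom.mul_mul_mul_comm, ← pow_add]
          have hexp : (cu + u₁ * (z' - 1) ^ (j + 1)) * (cv + u₂ * (z' - 1) ^ 1)
              = (cu * (cv + u₂ * (z' - 1) ^ 1) + u₁ * (z' - 1) ^ (j + 1) * cv)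
                + (u₁ * u₂) * (z' - 1) ^ (j + 1 + 1) := by
            rw [add_mul, mul_add (u₁ * (z' - 1) ^ (j + 1)), hprod, ← add_assoc]
          rw [hexp]
          exact Submodule.add_mem_sup
            (add_mem (coeffIn_mul_right hcu _) (coeffIn_mul_left _ hcv))
            (hZr_mem (j + 1 + 1) _)
      have hZrp : Zr p ≤ coeffIn G m := by
        rintro _ ⟨w, rfl⟩
        simp only [LinearMap.mulRight_apply]
        rw [hz'def]
        exact coeffIn_mul_left _ (sub_one_pow_prime_mem hp hpm hzp)
      refine ⟨M * p, Nat.mul_pos hM0 hp.pos, ?_⟩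
      rw [pow_mul]
      refine le_trans (pow_le_pow_of_le hKle p) ?_
      have hp1 : p = (p - 1) + 1 := (Nat.succ_pred_eq_of_pos hp.pos).symm
      calc (coeffIn G m ⊔ Zr 1) ^ p = (coeffIn G m ⊔ Zr 1) ^ ((p - 1) + 1) := by rw [← hp1]
        _ ≤ coeffIn G m ⊔ Zr ((p - 1) + 1) := hKpow (p - 1)
        _ = coeffIn G m ⊔ Zr p := by rw [← hp1]
        _ ≤ coeffIn G m := sup_le le_rfl hZrp


/-- The augmentation map. -/
noncomputable def eps (Λ G : Type*) [CommRing Λ] [Group G] :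
    MonoidAlgebra Λ G →ₐ[Λ] Λ :=
  MonoidAlgebra.lift Λ Λ G 1

lemma eps_single (g : G) (a : Λ) : eps Λ G (MonoidAlgebra.single g a) = a := by
  rw [eps, MonoidAlgebra.lift_single]
  simp

lemma mem_augS_of_eps_eq_zero {x : MonoidAlgebra Λ G} (hx : eps Λ G x = 0) :
    x ∈ augS Λ G := by
  classical
  have hrepr : x = ∑ g ∈ x.coeff.support, MonoidAlgebra.single g (x.coeff g) :=
    (MonoidAlgebra.sum_coeff_single x).symm
  have heps : eps Λ G x = ∑ g ∈ x.coeff.support, x.coeff g := by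
    conv_lhs => rw [hrepr]
    rw [map_sum]
    exact Finset.sum_congr rfl fun g _ => eps_single g (x.coeff g)
  have h1 : ∀ g : G, (x.coeff g) • ((MonoidAlgebra.single g 1 : MonoidAlgebra Λ G) - 1)
      = MonoidAlgebra.single g (x.coeff g) - (x.coeff g) • 1 := by
    intro g; rw [smul_sub, MonoidAlgebra.smul_single', mul_one]
  have key : x = (∑ g ∈ x.coeff.support, (x.coeff g) • ((MonoidAlgebra.single g 1 : MonoidAlgebra Λ G) - 1))
      + (eps Λ G x) • 1 := by
    rw [heps]
    simp only [h1]
    rw [Finset.sum_sub_distrib, ← Finset.sum_smul, ← hrepr]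
    abel
  rw [key, hx, zero_smul, add_zero]
  exact Submodule.sum_mem _ fun g _ =>
    Submodule.smul_mem _ _ (Submodule.subset_span ⟨g, rfl⟩)

lemma isUnit_one_add_of_mem_augS {p : ℕ} (hp : p.Prime) (m : Ideal Λ) (hpm : (p : Λ) ∈ m)
    [IsAdicComplete m Λ] [Finite G] (hG : IsPGroup p G)
    {x : MonoidAlgebra Λ G} (hx : x ∈ augS Λ G) : IsUnit (1 + x) := by
  classical
  obtain ⟨N, hN0, hNle⟩ := aug_pow_le hp m hpm (Nat.card G) G rfl hG
  have htop : ∀ k : ℕ, (m ^ k • ⊤ : Submodule Λ Λ) = (m ^ k : Ideal Λ) := fun k => by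
    rw [Ideal.smul_eq_mul, Ideal.mul_top]
  have hpow : ∀ k, x ^ (N * k) ∈ coeffIn G (m ^ k) := by
    intro k
    induction k with
    | zero =>
      intro g
      rw [pow_zero, Ideal.one_eq_top]
      exact Submodule.mem_top
    | succ k ih =>
      have hxN : x ^ N ∈ coeffIn G m := hNle (Submodule.pow_mem_pow _ hx N)
      have hmul := coeffIn_mul_mem ih hxN
      rw [← pow_succ] at hmul
      rw [Nat.mul_succ, pow_add x (N * k) N]
      exact hmul
  set Sn : ℕ → MonoidAlgebra Λ G := fun n => ∑ i ∈ Finset.range n, (-x) ^ i with hSn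
  have hdiff : ∀ k l, k ≤ l → Sn (N * l) - Sn (N * k) ∈ coeffIn G (m ^ k) := by
    intro k l hkl
    have hle : N * k ≤ N * l := Nat.mul_le_mul_left N hkl
    rw [hSn]
    dsimp only
    rw [← Finset.sum_Ico_eq_sub _ hle]
    refine Submodule.sum_mem _ fun i hi => ?_
    rw [Finset.mem_Ico] at hi
    have hxi : (-x : MonoidAlgebra Λ G) ^ i
        = ((-1 : MonoidAlgebra Λ G) ^ i * x ^ (N * k)) * x ^ (i - N * k) := by
      rw [mul_assoc, ← pow_add, Nat.add_sub_cancel' hi.1, neg_pow]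
    rw [hxi]
    exact coeffIn_mul_right (coeffIn_mul_left _ (hpow k)) _
  have hcomp : ∀ g : G, ∃ L : Λ, ∀ k, (Sn (N * k)).coeff g ≡ L [SMOD (m ^ k • ⊤ : Submodule Λ Λ)] := by
    intro g
    refine IsPrecomplete.prec (IsAdicComplete.toIsPrecomplete) ?_
    intro k l hkl
    rw [SModEq.sub_mem, htop]
    have hd := hdiff k l hkl
    have he : (Sn (N * k)).coeff g - (Sn (N * l)).coeff g = -((Sn (N * l) - Sn (N * k)).coeff g) := by
      rw [MonoidAlgebra.coeff_sub, Finsupp.sub_apply]; ring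
    rw [he]
    exact neg_mem (hd g)
  choose L hL using hcomp
  haveI := Fintype.ofFinite G
  set y : MonoidAlgebra Λ G := MonoidAlgebra.ofCoeff (Finsupp.equivFunOnFinite.symm L) with hy
  have hyg : ∀ g, y.coeff g = L g := fun g => by
    rw [hy]; exact congrFun (Finsupp.equivFunOnFinite.apply_symm_apply L) g
  have hyS : ∀ k, y - Sn (N * k) ∈ coeffIn G (m ^ k) := by
    intro k g
    rw [MonoidAlgebra.coeff_sub, Finsupp.sub_apply, hyg]
    have hLk := hL g k
    rw [SModEq.sub_mem, htop] at hLk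
    have he : L g - (Sn (N * k)).coeff g = -((Sn (N * k)).coeff g - L g) := by ring
    rw [he]
    exact neg_mem hLk
  have hneg : (1 + x : MonoidAlgebra Λ G) = -(-x - 1) := by
    rw [neg_sub, sub_neg_eq_add]
  have hgeoml : ∀ n, (1 + x) * Sn n = 1 - (-x) ^ n := by
    intro n
    have h := mul_geom_sum (-x) n
    rw [hneg, neg_mul, h, neg_sub]
  have hgeomr : ∀ n, Sn n * (1 + x) = 1 - (-x) ^ n := by
    intro n
    have h := geom_sum_mul (-x) n
    rw [hneg, mul_neg, h, neg_sub]
  have hnegpow : ∀ k, -((-x : MonoidAlgebra Λ G) ^ (N * k)) ∈ coeffIn G (m ^ k) := by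
    intro k
    refine neg_mem ?_
    rw [neg_pow]
    exact coeffIn_mul_left _ (hpow k)
  have hmain : ∀ k, (1 + x) * y - 1 ∈ coeffIn G (m ^ k) := by
    intro k
    have e : (1 + x) * y - 1
        = (1 + x) * (y - Sn (N * k)) + ((1 + x) * Sn (N * k) - 1) := by noncomm_ring
    rw [e, hgeoml]
    have e2 : (1 - (-x) ^ (N * k) - 1 : MonoidAlgebra Λ G) = -((-x) ^ (N * k)) := by abel
    rw [e2]
    exact add_mem (coeffIn_mul_left _ (hyS k)) (hnegpow k)
  have hmain' : ∀ k, y * (1 + x) - 1 ∈ coeffIn G (m ^ k) := by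
    intro k
    have e : y * (1 + x) - 1
        = (y - Sn (N * k)) * (1 + x) + (Sn (N * k) * (1 + x) - 1) := by noncomm_ring
    rw [e, hgeomr]
    have e2 : (1 - (-x) ^ (N * k) - 1 : MonoidAlgebra Λ G) = -((-x) ^ (N * k)) := by abel
    rw [e2]
    exact add_mem (coeffIn_mul_right (hyS k) _) (hnegpow k)
  have hzero : ∀ w : MonoidAlgebra Λ G, (∀ k, w ∈ coeffIn G (m ^ k)) → w = 0 := by
    intro w hw
    ext g
    refine IsHausdorff.haus (inferInstance : IsHausdorff m Λ) (w.coeff g) fun k => ?_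
    rw [SModEq.zero, htop]
    exact hw k g
  have h1 : (1 + x) * y = 1 := sub_eq_zero.mp (hzero _ hmain)
  have h2 : y * (1 + x) = 1 := sub_eq_zero.mp (hzero _ hmain')
  exact ⟨⟨1 + x, y, h1, h2⟩, rfl⟩

end MonoidAlgebraLocalAux

/-- If `Λ` is a complete noetherian local (commutative) ring whose residue field
has characteristic `p > 0`, and `G` is a finite `p`-group, then the group algebra
`Λ[G]` is a local ring (it has a unique maximal left ideal). -/
theorem monoidAlgebra_isLocalRing (Λ : Type*) [CommRing Λ] [IsLocalRing Λ]
    [IsNoetherianRing Λ] [IsAdicComplete (IsLocalRing.maximalIdeal Λ) Λ]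
    (p : ℕ) [Fact p.Prime] [CharP (IsLocalRing.ResidueField Λ) p]
    (G : Type*) [Group G] [Finite G] (hG : IsPGroup p G) :
    IsLocalRing (MonoidAlgebra Λ G) := by
  classical
  open MonoidAlgebraLocalAux in
  have hpm : (p : Λ) ∈ IsLocalRing.maximalIdeal Λ := by
    have h0 : IsLocalRing.residue Λ (p : Λ) = 0 := by
      rw [map_natCast]
      exact CharP.cast_eq_zero _ p
    exact (IsLocalRing.residue_eq_zero_iff _).mp h0
  haveI : Nonempty G := ⟨1⟩
  haveI : Nontrivial (MonoidAlgebra Λ G) := MonoidAlgebra.instNontrivial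
  have key : ∀ b : MonoidAlgebra Λ G,
      IsUnit (MonoidAlgebraLocalAux.eps Λ G b) → IsUnit b := by
    intro b hb
    obtain ⟨u, hu⟩ := hb
    set x := ((u⁻¹ : Λˣ) : Λ) • b - 1 with hxdef
    have hex : MonoidAlgebraLocalAux.eps Λ G x = 0 := by
      rw [hxdef, map_sub, map_smul, map_one, ← hu, smul_eq_mul, Units.inv_mul, sub_self]
    have hx : x ∈ MonoidAlgebraLocalAux.augS Λ G :=
      MonoidAlgebraLocalAux.mem_augS_of_eps_eq_zero hex
    have hux : IsUnit (1 + x) :=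
      MonoidAlgebraLocalAux.isUnit_one_add_of_mem_augS (Fact.out : p.Prime)
        (IsLocalRing.maximalIdeal Λ) hpm hG hx
    have h1x : (1 + x : MonoidAlgebra Λ G) = ((u⁻¹ : Λˣ) : Λ) • b := by
      rw [hxdef]; abel
    rw [h1x] at hux
    have hb2 : b = (u : Λ) • (((u⁻¹ : Λˣ) : Λ) • b) := by
      rw [smul_smul, Units.mul_inv, one_smul]
    rw [hb2, Algebra.smul_def]
    exact (u.isUnit.map (algebraMap Λ (MonoidAlgebra Λ G))).mul hux
  refine ⟨fun {a b} hab => ?_⟩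
  have hsum : MonoidAlgebraLocalAux.eps Λ G a + MonoidAlgebraLocalAux.eps Λ G b = 1 := by
    rw [← map_add, hab, map_one]
  rcases IsLocalRing.isUnit_or_isUnit_of_add_one hsum with h | h
  · exact Or.inl (key a h)
  · exact Or.inr (key _ h)
end

section
/- Let Λ be a complete noetherian local ring whose residue field has characteristic p > 0, and let G be a finite p-group. Then every finitely generated projective module over the group algebra Λ[G] is a free Λ[G]-module. -/
universe u v
universe w

open MonoidAlgebra

section Aug

variable {Λ : Type u} [CommRing Λ] {G : Type w} [Group G]

section Aug

variable {Λ : Type u} [CommRing Λ] {G : Type w} [Group G]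

/-- The augmentation map. -/
noncomputable def aug : MonoidAlgebra Λ G →ₐ[Λ] Λ :=
  MonoidAlgebra.lift Λ Λ G 1

@[simp] lemma aug_single (g : G) (c : Λ) : aug (single g c) = c := by
  simp [aug, MonoidAlgebra.lift_single]

lemma aug_mapDomain {G' : Type*} [Group G'] (f : G → G') (x : MonoidAlgebra Λ G) :
    aug (MonoidAlgebra.mapDomain f x) = aug x := by
  induction x using MonoidAlgebra.induction_linear with
  | zero => simp
  | add a b ha hb => rw [MonoidAlgebra.mapDomain_add, map_add, map_add, ha, hb]
  | single a c =>
    rw [MonoidAlgebra.mapDomain_single]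
    exact (aug_single (f a) c).trans (aug_single a c).symm

variable (J : Ideal Λ)

lemma JT_mul_left {a : MonoidAlgebra Λ G} (b : MonoidAlgebra Λ G)
    (ha : a ∈ (J • ⊤ : Submodule Λ (MonoidAlgebra Λ G))) :
    b * a ∈ (J • ⊤ : Submodule Λ (MonoidAlgebra Λ G)) := by
  refine Submodule.smul_induction_on ha (fun r hr m _ => ?_) (fun x y hx hy => ?_)
  · rw [mul_smul_comm]
    exact Submodule.smul_mem_smul hr trivial
  · rw [mul_add]; exact Submodule.add_mem _ hx hy

lemma JT_mul_right {a : MonoidAlgebra Λ G} (b : MonoidAlgebra Λ G)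
    (ha : a ∈ (J • ⊤ : Submodule Λ (MonoidAlgebra Λ G))) :
    a * b ∈ (J • ⊤ : Submodule Λ (MonoidAlgebra Λ G)) := by
  refine Submodule.smul_induction_on ha (fun r hr m _ => ?_) (fun x y hx hy => ?_)
  · rw [smul_mul_assoc]
    exact Submodule.smul_mem_smul hr trivial
  · rw [add_mul]; exact Submodule.add_mem _ hx hy

variable (p : ℕ) [Fact p.Prime]

lemma sub_one_pow_mem (hpJ : (p : Λ) ∈ J) (u : MonoidAlgebra Λ G) {k : ℕ} (hk : 0 < k)
    (hu : u ^ (p ^ k) = 1) :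
    (u - 1) ^ (p ^ k) ∈ (J • ⊤ : Submodule Λ (MonoidAlgebra Λ G)) := by
  have hp : p.Prime := Fact.out
  set M := p ^ k with hM
  have hM0 : M ≠ 0 := pow_ne_zero _ hp.pos.ne'
  have hcomm : Commute u (-1 : MonoidAlgebra Λ G) := (Commute.one_right u).neg_right
  have hexp : (u - 1) ^ M =
      ∑ i ∈ Finset.range (M + 1), u ^ i * (-1 : MonoidAlgebra Λ G) ^ (M - i) * (M.choose i : MonoidAlgebra Λ G) := by
    rw [sub_eq_add_neg, hcomm.add_pow]
  set f : ℕ → MonoidAlgebra Λ G := fun i => u ^ i * (-1 : MonoidAlgebra Λ G) ^ (M - i) * (M.choose i : MonoidAlgebra Λ G) with hf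
  have h0mem : (0 : ℕ) ∈ Finset.range (M + 1) := by simp
  have hMmem : M ∈ (Finset.range (M + 1)).erase 0 := by
    simp [Finset.mem_erase, hM0]
  have hsplit : ∑ i ∈ Finset.range (M + 1), f i
      = f 0 + (f M + ∑ i ∈ ((Finset.range (M + 1)).erase 0).erase M, f i) := by
    rw [← Finset.add_sum_erase _ f h0mem, ← Finset.add_sum_erase _ f hMmem]
  rw [hexp, hsplit]
  have hmid : ∑ i ∈ ((Finset.range (M + 1)).erase 0).erase M, f i
      ∈ (J • ⊤ : Submodule Λ (MonoidAlgebra Λ G)) := by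
    refine Submodule.sum_mem _ (fun i hi => ?_)
    simp only [Finset.mem_erase, Finset.mem_range] at hi
    obtain ⟨hiM, hi0, _⟩ := hi
    have hdvd : p ∣ M.choose i := Nat.Prime.dvd_choose_pow hp hi0 hiM
    obtain ⟨t, ht⟩ := hdvd
    have : (M.choose i : MonoidAlgebra Λ G) = ((M.choose i : Λ)) • (1 : MonoidAlgebra Λ G) := by
      rw [← map_natCast (algebraMap Λ (MonoidAlgebra Λ G)) (M.choose i),
        Algebra.algebraMap_eq_smul_one]
    rw [hf]
    simp only
    rw [this, mul_smul_comm, mul_one]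
    refine Submodule.smul_mem_smul ?_ trivial
    have : ((M.choose i : ℕ) : Λ) = (p : Λ) * (t : Λ) := by rw [ht]; push_cast; ring
    rw [this]
    exact J.mul_mem_right _ hpJ
  have hends : f 0 + f M ∈ (J • ⊤ : Submodule Λ (MonoidAlgebra Λ G)) := by
    have hf0 : f 0 = (-1 : MonoidAlgebra Λ G) ^ M := by simp [hf]
    have hfM : f M = 1 := by simp [hf, hu]
    rw [hf0, hfM]
    rcases Nat.even_or_odd M with hev | hod
    · have hp2 : p = 2 := by
        have : (2 : ℕ) ∣ M := hev.two_dvd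
        have := (Nat.prime_two.dvd_of_dvd_pow (hM ▸ this))
        exact ((Nat.prime_dvd_prime_iff_eq Nat.prime_two hp).mp this).symm
      rw [hev.neg_one_pow]
      have : (1 : MonoidAlgebra Λ G) + 1 = ((2 : Λ)) • (1 : MonoidAlgebra Λ G) := by
        rw [two_smul]
      rw [this]
      refine Submodule.smul_mem_smul ?_ trivial
      have : ((2 : ℕ) : Λ) ∈ J := by rw [← hp2]; exact hpJ
      simpa using this
    · rw [hod.neg_one_pow]; simp
  have : f 0 + (f M + ∑ i ∈ ((Finset.range (M + 1)).erase 0).erase M, f i)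
      = (f 0 + f M) + ∑ i ∈ ((Finset.range (M + 1)).erase 0).erase M, f i := (add_assoc _ _ _).symm
  rw [this]
  exact Submodule.add_mem _ hends hmid


lemma single_pow_sub_one (g : G) (n : ℕ) :
    (MonoidAlgebra.single (g ^ n) (1 : Λ)) - 1
      = (∑ i ∈ Finset.range n, (MonoidAlgebra.single g (1 : Λ)) ^ i)
        * (MonoidAlgebra.single g (1 : Λ) - 1) := by
  rw [geom_sum_mul]
  congr 1
  rw [MonoidAlgebra.single_pow, one_pow]

lemma ker_mapDomain (g : G) [Finite G]
    (x : MonoidAlgebra Λ G)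
    (hx : MonoidAlgebra.mapDomain (QuotientGroup.mk (s := Subgroup.zpowers g)) x = 0) :
    ∃ a : MonoidAlgebra Λ G, x = a * (MonoidAlgebra.single g (1 : Λ) - 1) := by
  classical
  set c' : MonoidAlgebra Λ G := MonoidAlgebra.single g (1 : Λ) - 1 with hc'
  set S : Submodule Λ (MonoidAlgebra Λ G) := LinearMap.range (LinearMap.mulRight Λ c') with hS
  set π₀ : MonoidAlgebra Λ G → MonoidAlgebra Λ (G ⧸ Subgroup.zpowers g) :=
    MonoidAlgebra.mapDomain (QuotientGroup.mk (s := Subgroup.zpowers g)) with hπ₀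
  set σ₀ : MonoidAlgebra Λ (G ⧸ Subgroup.zpowers g) → MonoidAlgebra Λ G :=
    MonoidAlgebra.mapDomain (fun q : G ⧸ Subgroup.zpowers g => q.out) with hσ₀
  suffices h : ∀ y : MonoidAlgebra Λ G, y - σ₀ (π₀ y) ∈ S by
    have := h x
    rw [hx, show σ₀ 0 = 0 from MonoidAlgebra.mapDomain_zero _, sub_zero] at this
    obtain ⟨a, ha⟩ := this
    exact ⟨a, ha.symm⟩
  intro y
  induction y using MonoidAlgebra.induction_linear with
  | zero =>
    have : π₀ 0 = 0 := MonoidAlgebra.mapDomain_zero _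
    rw [this]
    have : σ₀ 0 = 0 := MonoidAlgebra.mapDomain_zero _
    rw [this, sub_zero]
    exact S.zero_mem
  | add a b ha hb =>
    have h1 : π₀ (a + b) = π₀ a + π₀ b := MonoidAlgebra.mapDomain_add _ _ _
    have h2 : σ₀ (π₀ a + π₀ b) = σ₀ (π₀ a) + σ₀ (π₀ b) := MonoidAlgebra.mapDomain_add _ _ _
    rw [h1, h2, ← sub_add_sub_comm]
    exact S.add_mem ha hb
  | single a c =>
    have h1 : π₀ (MonoidAlgebra.single a c)
        = MonoidAlgebra.single (QuotientGroup.mk (s := Subgroup.zpowers g) a) c :=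
      MonoidAlgebra.mapDomain_single
    set b : G := (QuotientGroup.mk (s := Subgroup.zpowers g) a).out with hb
    have h2 : σ₀ (MonoidAlgebra.single (QuotientGroup.mk (s := Subgroup.zpowers g) a) c)
        = MonoidAlgebra.single b c := MonoidAlgebra.mapDomain_single
    rw [h1, h2]
    have hmk : QuotientGroup.mk (s := Subgroup.zpowers g) b
        = QuotientGroup.mk (s := Subgroup.zpowers g) a := Quotient.out_eq _
    have hmem : b⁻¹ * a ∈ Subgroup.zpowers g := QuotientGroup.eq.mp hmk
    obtain ⟨n, hn⟩ := mem_powers_iff_mem_zpowers.mpr hmem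
    have hn' : g ^ n = b⁻¹ * a := hn
    have ha' : a = b * g ^ n := by rw [hn']; group
    have key : (MonoidAlgebra.single a c : MonoidAlgebra Λ G)
        - MonoidAlgebra.single b c
        = MonoidAlgebra.single b c * ((MonoidAlgebra.single (g ^ n) (1 : Λ)) - 1) := by
      rw [mul_sub, mul_one, MonoidAlgebra.single_mul_single, mul_one, ← ha']
    have : (MonoidAlgebra.single a c : MonoidAlgebra Λ G) - MonoidAlgebra.single b c
        = MonoidAlgebra.single b c * ((∑ i ∈ Finset.range n,
            (MonoidAlgebra.single g (1 : Λ)) ^ i) * c') := by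
      rw [← single_pow_sub_one]
      exact key
    rw [this, ← mul_assoc]
    exact ⟨_, rfl⟩

end Aug
section Main

variable {Λ : Type u} [CommRing Λ]

lemma add_pow_mem {G : Type w} [Group G] (J : Ideal Λ) {w : MonoidAlgebra Λ G}
    (hw : w ∈ (J • ⊤ : Submodule Λ (MonoidAlgebra Λ G))) (z : MonoidAlgebra Λ G) (M : ℕ) :
    (w + z) ^ M - z ^ M ∈ (J • ⊤ : Submodule Λ (MonoidAlgebra Λ G)) := by
  induction M with
  | zero => simpa using Submodule.zero_mem _
  | succ M ih =>
    have key : (w + z) ^ (M + 1) - z ^ (M + 1)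
        = (w + z) ^ M * w + ((w + z) ^ M - z ^ M) * z := by
      rw [pow_succ, pow_succ]; noncomm_ring
    rw [key]
    exact Submodule.add_mem _ (JT_mul_left J _ hw) (JT_mul_right J _ ih)

lemma aug_pow_aux (J : Ideal Λ) (p : ℕ) [Fact p.Prime] (hpJ : (p : Λ) ∈ J) :
    ∀ n : ℕ, ∀ (G : Type w) [Group G] [Finite G], IsPGroup p G → Nat.card G = n →
      ∃ N : ℕ, 0 < N ∧ ∀ x : MonoidAlgebra Λ G, aug x ∈ J →
        x ^ N ∈ (J • ⊤ : Submodule Λ (MonoidAlgebra Λ G)) := by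
  intro n
  induction n using Nat.strong_induction_on with
  | _ n IH =>
    intro G _ _ hG hcard
    rcases subsingleton_or_nontrivial G with hsub | hnt
    · refine ⟨1, one_pos, fun x hx => ?_⟩
      have key : ∀ y : MonoidAlgebra Λ G, y = aug y • (1 : MonoidAlgebra Λ G) := by
        intro y
        induction y using MonoidAlgebra.induction_linear with
        | zero => simp
        | add a b ha hb => rw [map_add, add_smul, ← ha, ← hb]
        | single a c =>
          have ha1 : a = 1 := Subsingleton.elim a 1
          subst ha1
          have h1 : aug (MonoidAlgebra.single (1 : G) c) = c := aug_single 1 c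
          show MonoidAlgebra.single (1 : G) c = _
          rw [h1, MonoidAlgebra.one_def, MonoidAlgebra.smul_single, smul_eq_mul, mul_one]
      rw [pow_one, key x]
      exact Submodule.smul_mem_smul hx trivial
    · -- nontrivial case
      haveI : Nontrivial G := hnt
      haveI := hG.center_nontrivial
      obtain ⟨z, hz1⟩ := exists_ne (1 : Subgroup.center G)
      set g : G := (z : G) with hgdef
      have hg1 : g ≠ 1 := fun h => hz1 (Subtype.ext h)
      have hgc : g ∈ Subgroup.center G := z.2
      obtain ⟨j, hj⟩ := (IsPGroup.iff_orderOf.mp hG) g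
      have hj1 : 0 < j := by
        rcases Nat.eq_zero_or_pos j with h0 | h; swap; · exact h
        exfalso
        rw [h0, pow_zero, orderOf_eq_one_iff] at hj
        exact hg1 hj
      set H : Subgroup G := Subgroup.zpowers g with hH
      have hnormal : H.Normal := by
        constructor
        intro x hx nn
        have hxc : x ∈ Subgroup.center G := by
          obtain ⟨m, rfl⟩ := hx
          exact (Subgroup.center G).zpow_mem hgc m
        have := Subgroup.mem_center_iff.mp hxc nn
        have hconj : nn * x * nn⁻¹ = x := by
          rw [this]; group
        rwa [hconj]
      set Q := G ⧸ H with hQdef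
      have hQ : IsPGroup p Q := hG.to_quotient H
      have hcardH : 1 < Nat.card H := by
        rw [Finite.one_lt_card_iff_nontrivial]
        exact ⟨⟨⟨g, Subgroup.mem_zpowers g⟩, 1, by simpa using hg1⟩⟩
      have hcardQ : Nat.card Q < n := by
        have hmul := Subgroup.card_eq_card_quotient_mul_card_subgroup H
        have hpos : 0 < Nat.card Q := Nat.card_pos
        calc Nat.card Q < Nat.card Q * Nat.card H := by
              exact lt_mul_of_one_lt_right hpos hcardH
        _ = Nat.card G := hmul.symm
        _ = n := hcard
      obtain ⟨N₁, hN₁pos, hN₁⟩ := IH (Nat.card Q) hcardQ Q hQ rfl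
      set M := orderOf g with hM
      have hMpos : 0 < M := by
        rw [hj]
        exact pow_pos (Fact.out (p := p.Prime)).pos j
      refine ⟨N₁ * M, Nat.mul_pos hN₁pos hMpos, fun x hx => ?_⟩
      set f := QuotientGroup.mk' H with hf
      set π := MonoidAlgebra.mapDomainRingHom Λ f with hπ
      set πₗ : MonoidAlgebra Λ G →ₗ[Λ] MonoidAlgebra Λ Q := MonoidAlgebra.mapDomainLinearMap Λ Λ ⇑f with hπₗ
      have hπx : ∀ y : MonoidAlgebra Λ G, π y = MonoidAlgebra.mapDomain (⇑f) y := fun y => rfl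
      have hπₗx : ∀ y : MonoidAlgebra Λ G, πₗ y = MonoidAlgebra.mapDomain (⇑f) y := fun y => rfl
      have key1 : aug (π x) ∈ J := by
        rw [hπx, aug_mapDomain]; exact hx
      have h3 : π (x ^ N₁) ∈ (J • ⊤ : Submodule Λ (MonoidAlgebra Λ Q)) := by
        rw [map_pow]
        exact hN₁ _ key1
      have hrange : LinearMap.range πₗ = ⊤ := by
        rw [LinearMap.range_eq_top]
        intro y
        induction y using MonoidAlgebra.induction_linear with
        | zero => exact ⟨0, map_zero _⟩
        | add a b ha hb =>
          obtain ⟨xa, hxa⟩ := ha; obtain ⟨xb, hxb⟩ := hb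
          exact ⟨xa + xb, by rw [map_add, hxa, hxb]⟩
        | single q c =>
          obtain ⟨a, ha⟩ := QuotientGroup.mk'_surjective H q
          exact ⟨MonoidAlgebra.single a c, by rw [hπₗx, MonoidAlgebra.mapDomain_single, ha]⟩
      have h4 : (J • ⊤ : Submodule Λ (MonoidAlgebra Λ Q))
          = Submodule.map πₗ (J • ⊤ : Submodule Λ (MonoidAlgebra Λ G)) := by
        rw [Submodule.map_smul'', Submodule.map_top, hrange]
      obtain ⟨w, hw, hww⟩ := by rw [h4] at h3; exact Submodule.mem_map.mp h3
      have h6 : MonoidAlgebra.mapDomain (QuotientGroup.mk (s := H)) (x ^ N₁ - w) = 0 := by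
        have : πₗ (x ^ N₁ - w) = 0 := by
          rw [map_sub, hww, hπₗx, ← hπx, sub_self]
        rw [hπₗx] at this
        rwa [show ⇑f = (QuotientGroup.mk (s := H)) from rfl] at this
      obtain ⟨a, ha⟩ := ker_mapDomain g (x ^ N₁ - w) h6
      have hxw : x ^ N₁ = w + a * (MonoidAlgebra.single g (1 : Λ) - 1) := by
        rw [← ha]; abel
      -- commutation
      have hcommg : ∀ r : MonoidAlgebra Λ G, Commute (MonoidAlgebra.single g (1 : Λ)) r := by
        intro r
        show MonoidAlgebra.single g 1 * r = r * MonoidAlgebra.single g 1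
        refine MonoidAlgebra.ext (Finsupp.ext fun y => ?_)
        rw [MonoidAlgebra.coeff_single_mul_apply, MonoidAlgebra.coeff_mul_single_apply, one_mul, mul_one]
        congr 1
        have hcg := Subgroup.mem_center_iff.mp hgc y
        calc g⁻¹ * y = g⁻¹ * (y * g) * g⁻¹ := by group
        _ = g⁻¹ * (g * y) * g⁻¹ := by rw [hcg]
        _ = y * g⁻¹ := by group
      set c' : MonoidAlgebra Λ G := MonoidAlgebra.single g (1 : Λ) - 1 with hc'
      have hcomm : Commute a c' := ((hcommg a).symm).sub_right (Commute.one_right a)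
      have hc'M : c' ^ M ∈ (J • ⊤ : Submodule Λ (MonoidAlgebra Λ G)) := by
        rw [hj]
        refine sub_one_pow_mem J p hpJ _ hj1 ?_
        rw [MonoidAlgebra.single_pow, one_pow, ← hj, hM, pow_orderOf_eq_one,
          MonoidAlgebra.one_def]
      have hzM : (a * c') ^ M ∈ (J • ⊤ : Submodule Λ (MonoidAlgebra Λ G)) := by
        rw [hcomm.mul_pow]
        exact JT_mul_left J _ hc'M
      have : x ^ (N₁ * M) = ((w + a * c') ^ M - (a * c') ^ M) + (a * c') ^ M := by
        rw [pow_mul, hxw]; abel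
      rw [this]
      exact Submodule.add_mem _ (add_pow_mem J hw _ M) hzM

end Main
section Units

open IsLocalRing

variable {Λ : Type u} [CommRing Λ] [IsLocalRing Λ] {G : Type w} [Group G] [Finite G]

instance : Module.Finite Λ (MonoidAlgebra Λ G) :=
  inferInstance

lemma one_sub_right_inv {y : MonoidAlgebra Λ G}
    (hy : y ∈ ((maximalIdeal Λ) • ⊤ : Submodule Λ (MonoidAlgebra Λ G))) :
    ∃ r, (1 - y) * r = 1 := by
  set L : MonoidAlgebra Λ G →ₗ[Λ] MonoidAlgebra Λ G := LinearMap.mulLeft Λ (1 - y) with hL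
  have htop : (⊤ : Submodule Λ (MonoidAlgebra Λ G)) ≤ LinearMap.range L := by
    refine Submodule.le_of_le_smul_of_le_jacobson_bot (I := maximalIdeal Λ)
      (N := LinearMap.range L) (N' := ⊤) Module.Finite.fg_top ?_ ?_
    · rw [jacobson_eq_maximalIdeal ⊥ bot_ne_top]
    · intro r _
      have hr : r = (1 - y) * r + y * r := by noncomm_ring
      rw [hr]
      exact Submodule.add_mem _
        (Submodule.mem_sup_left ⟨r, rfl⟩)
        (Submodule.mem_sup_right (JT_mul_right _ r (by simpa using hy)))
  obtain ⟨r, hr⟩ := htop (Submodule.mem_top (x := (1 : MonoidAlgebra Λ G)))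
  exact ⟨r, hr⟩

variable (p : ℕ) [Fact p.Prime] [CharP (ResidueField Λ) p]

lemma p_mem_max : (p : Λ) ∈ maximalIdeal Λ := by
  rw [← residue_eq_zero_iff]
  rw [map_natCast (residue Λ) p]
  exact CharP.cast_eq_zero (ResidueField Λ) p

variable (hG : IsPGroup p G)

include hG in
lemma right_inv_of_aug_mem {x : MonoidAlgebra Λ G} (hx : aug x ∈ maximalIdeal Λ) :
    ∃ r, (1 - x) * r = 1 := by
  obtain ⟨N, hNpos, hN⟩ := aug_pow_aux (maximalIdeal Λ) p (p_mem_max p) (Nat.card G) G hG rfl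
  have hxN := hN x hx
  obtain ⟨r, hr⟩ := one_sub_right_inv hxN
  refine ⟨(∑ i ∈ Finset.range N, x ^ i) * r, ?_⟩
  have hgeom : (1 - x) * (∑ i ∈ Finset.range N, x ^ i) = 1 - x ^ N := by
    have h1 : (∑ i ∈ Finset.range N, x ^ i) * (x - 1) = x ^ N - 1 := geom_sum_mul x N
    have hcomm : Commute (1 - x) (∑ i ∈ Finset.range N, x ^ i) := by
      refine Commute.sum_right _ _ _ fun i _ => ?_
      exact ((Commute.one_left x).sub_left (Commute.refl x)).pow_right i
    rw [hcomm.eq]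
    calc (∑ i ∈ Finset.range N, x ^ i) * (1 - x)
        = -((∑ i ∈ Finset.range N, x ^ i) * (x - 1)) := by noncomm_ring
    _ = 1 - x ^ N := by rw [h1]; noncomm_ring
  rw [← mul_assoc, hgeom, hr]

include hG in
lemma isUnit_one_sub_of_aug_mem {x : MonoidAlgebra Λ G} (hx : aug x ∈ maximalIdeal Λ) :
    IsUnit (1 - x) := by
  obtain ⟨s, hs⟩ := right_inv_of_aug_mem p hG hx
  have hxs : aug (-(x * s)) ∈ maximalIdeal Λ := by
    rw [map_neg, map_mul]
    exact neg_mem ((maximalIdeal Λ).mul_mem_right _ hx)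
  have hs' : 1 - (-(x * s)) = s := by
    have h1 : s - x * s = 1 := by
      calc s - x * s = (1 - x) * s := by noncomm_ring
      _ = 1 := hs
    calc 1 - (-(x * s)) = (s - x * s) + x * s := by rw [h1]; abel
    _ = s := by noncomm_ring
  obtain ⟨t, ht⟩ := right_inv_of_aug_mem p hG hxs
  rw [hs'] at ht
  -- ht : s * t = 1
  have hts : t = 1 - x := by
    calc t = 1 * t := (one_mul t).symm
    _ = ((1 - x) * s) * t := by rw [hs]
    _ = (1 - x) * (s * t) := by rw [mul_assoc]
    _ = 1 - x := by rw [ht, mul_one]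
  have hleft : s * (1 - x) = 1 := by rw [← hts]; exact ht
  exact ⟨⟨1 - x, s, hs, hleft⟩, rfl⟩

include hG in
lemma isUnit_of_aug_not_mem {x : MonoidAlgebra Λ G} (hx : aug x ∉ maximalIdeal Λ) :
    IsUnit x := by
  have hu : IsUnit (aug x) := by
    by_contra h
    exact hx h
  set v := hu.unit with hv
  have hvx : (v : Λ) = aug x := hu.unit_spec
  set x' := ((v⁻¹ : Λˣ) : Λ) • x with hx'
  have haug : aug x' = 1 := by
    rw [hx', map_smul, smul_eq_mul, ← hvx]
    exact v.inv_mul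
  have h1 : aug (1 - x') ∈ maximalIdeal Λ := by
    rw [map_sub, map_one, haug, sub_self]
    exact zero_mem _
  have hux' : IsUnit x' := by
    have := isUnit_one_sub_of_aug_mem p hG h1
    rwa [sub_sub_cancel] at this
  have hxeq : x = ((v : Λˣ) : Λ) • x' := by
    rw [hx', smul_smul, v.mul_inv, one_smul]
  rw [hxeq]
  have : ((v : Λˣ) : Λ) • x' = (algebraMap Λ (MonoidAlgebra Λ G) (v : Λ)) * x' := by
    rw [Algebra.smul_def]
  rw [this]
  exact (hu.map (algebraMap Λ (MonoidAlgebra Λ G))).mul hux'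

end Units
section Kaplansky

variable {S : Type u} [Ring S]

/-- `Fin.snoc` with a zero last coordinate as a linear map. -/
def snocLin (S : Type u) [Ring S] (n : ℕ) : (Fin n → S) →ₗ[S] (Fin (n + 1) → S) where
  toFun y := Fin.snoc y 0
  map_add' a b := by
    funext i
    refine Fin.lastCases ?_ (fun j => ?_) i <;> simp
  map_smul' c a := by
    funext i
    refine Fin.lastCases ?_ (fun j => ?_) i <;> simp

lemma snoc_init_of_last_zero {n : ℕ} {v : Fin (n + 1) → S} (hv : v (Fin.last n) = 0) :
    snocLin S n (Fin.init v) = v := by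
  funext i
  refine Fin.lastCases ?_ (fun j => ?_) i
  · simp [snocLin, hv]
  · simp [snocLin, Fin.init]

lemma free_of_surj (hS : ∀ a : S, IsUnit a ∨ IsUnit (1 - a)) :
    ∀ n : ℕ, ∀ (P : Type v) [AddCommGroup P] [Module S P] [Module.Projective S P]
      (q : (Fin n → S) →ₗ[S] P), Function.Surjective q → Module.Free S P := by
  intro n
  induction n with
  | zero =>
    intro P _ _ _ q hq
    have : Subsingleton P := ⟨fun a b => by
      obtain ⟨x, rfl⟩ := hq a; obtain ⟨y, rfl⟩ := hq b
      rw [Subsingleton.elim x y]⟩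
    exact Module.Free.of_subsingleton S P
  | succ n IH =>
    intro P _ _ _ q hq
    obtain ⟨σ, hσ⟩ := Module.projective_lifting_property q LinearMap.id hq
    have hσ' : ∀ x : P, q (σ x) = x := fun x => LinearMap.congr_fun hσ x
    set b : Fin (n + 1) → S := Pi.single (Fin.last n) 1 with hb
    have hblast : b (Fin.last n) = 1 := by simp [hb]
    set c : S := σ (q b) (Fin.last n) with hc
    rcases hS c with hcu | hcu
    · -- `c` is a unit: split off a free rank-one factor
      set w : P := q b with hw
      set φ : P →ₗ[S] S :=
        { toFun := fun x => σ x (Fin.last n) * ((hcu.unit⁻¹ : Sˣ) : S)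
          map_add' := fun x y => by simp [add_mul]
          map_smul' := fun r x => by simp [mul_assoc] } with hφ
      have hφw : φ w = 1 := by
        simp only [hφ, LinearMap.coe_mk, AddHom.coe_mk, hw, ← hc]
        exact hcu.mul_val_inv
      set τ : P →ₗ[S] P := LinearMap.id - (LinearMap.toSpanSingleton S P w).comp φ with hτ
      have hτval : ∀ x, τ x = x - φ x • w := fun x => rfl
      have hτK : ∀ x, φ (τ x) = 0 := by
        intro x
        rw [hτval, map_sub, map_smul, smul_eq_mul, hφw, mul_one, sub_self]
      set K := LinearMap.ker φ with hK
      set ρ : P →ₗ[S] K := τ.codRestrict K (fun x => hτK x) with hρ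
      have hρval : ∀ x, (ρ x : P) = x - φ x • w := fun x => rfl
      have hρK : ∀ y : K, ρ (y : P) = y := by
        intro y
        apply Subtype.ext
        rw [hρval, y.2.out]
        simp
      -- K is projective
      have hKproj : Module.Projective S K :=
        Module.Projective.of_split K.subtype ρ (by ext y; exact congrArg Subtype.val (hρK y))
      -- surjection from (Fin n → S) onto K
      set B : Fin (n + 1) → S := ((hcu.unit⁻¹ : Sˣ) : S) • σ (q b) with hB
      have hBlast : B (Fin.last n) = 1 := by
        simp only [hB, Pi.smul_apply, smul_eq_mul, ← hc]
        exact hcu.val_inv_mul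
      have hρw : ρ w = 0 := by
        apply Subtype.ext
        rw [hρval, hφw, one_smul, sub_self]
        rfl
      set ρq : (Fin (n + 1) → S) →ₗ[S] K := ρ.comp q with hρq
      have hρqB : ρq B = 0 := by
        have hqB : q B = ((hcu.unit⁻¹ : Sˣ) : S) • w := by
          rw [hB, map_smul, hσ', hw]
        rw [hρq, LinearMap.comp_apply, hqB, map_smul, hρw, smul_zero]
      have hρqsurj : Function.Surjective ρq := by
        intro y
        obtain ⟨v, hv⟩ := hq (y : P)
        refine ⟨v, ?_⟩
        rw [hρq, LinearMap.comp_apply, hv]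
        exact hρK y
      have hq₂surj : Function.Surjective (ρq.comp (snocLin S n)) := by
        intro y
        obtain ⟨v, hv⟩ := hρqsurj y
        set v' := v - v (Fin.last n) • B with hv'
        have hlast : v' (Fin.last n) = 0 := by
          simp [hv', hBlast]
        refine ⟨Fin.init v', ?_⟩
        rw [LinearMap.comp_apply, snoc_init_of_last_zero hlast]
        rw [hv', map_sub, map_smul, hρqB, smul_zero, sub_zero, hv]
      have hKfree : Module.Free S K := IH K (ρq.comp (snocLin S n)) hq₂surj
      -- P ≃ S × K
      set F : P →ₗ[S] S × K := LinearMap.prod φ ρ with hF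
      set Gm : S × K →ₗ[S] P :=
        (LinearMap.toSpanSingleton S P w).comp (LinearMap.fst S S K)
          + K.subtype.comp (LinearMap.snd S S K) with hGm
      have h2 : Gm.comp F = LinearMap.id := by
        apply LinearMap.ext
        intro x
        simp only [hGm, hF, LinearMap.comp_apply, LinearMap.add_apply, LinearMap.prod_apply,
          Function.prod, LinearMap.fst_apply, LinearMap.snd_apply, LinearMap.toSpanSingleton_apply,
          Submodule.coe_subtype, LinearMap.id_apply]
        rw [hρval]
        abel
      have h1 : F.comp Gm = LinearMap.id := by
        apply LinearMap.ext
        rintro ⟨s, y⟩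
        have hGmval : Gm (s, y) = s • w + (y : P) := by
          simp [hGm]
        apply Prod.ext
        · simp only [LinearMap.comp_apply, hGmval, LinearMap.id_apply, hF,
            LinearMap.prod_apply, Function.prod]
          rw [map_add, map_smul, smul_eq_mul, hφw, mul_one, y.2.out, add_zero]
        · simp only [LinearMap.comp_apply, hGmval, LinearMap.id_apply, hF,
            LinearMap.prod_apply, Function.prod]
          rw [map_add, map_smul, hρw, smul_zero, zero_add, hρK y]
      have equiv : P ≃ₗ[S] S × K := LinearEquiv.ofLinear F Gm h1 h2
      have : Module.Free S (S × K) := by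
        have := hKfree
        infer_instance
      exact Module.Free.of_equiv equiv.symm
    · -- `1 - c` is a unit: drop a generator
      set B : Fin (n + 1) → S := ((hcu.unit⁻¹ : Sˣ) : S) • (b - σ (q b)) with hB
      have hqB : q B = 0 := by
        rw [hB, map_smul, map_sub, hσ', sub_self, smul_zero]
      have hBlast : B (Fin.last n) = 1 := by
        simp only [hB, Pi.smul_apply, smul_eq_mul, Pi.sub_apply, hblast, ← hc]
        exact hcu.val_inv_mul
      have hq₂surj : Function.Surjective (q.comp (snocLin S n)) := by
        intro y
        obtain ⟨v, hv⟩ := hq y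
        set v' := v - v (Fin.last n) • B with hv'
        have hlast : v' (Fin.last n) = 0 := by
          simp [hv', hBlast]
        refine ⟨Fin.init v', ?_⟩
        rw [LinearMap.comp_apply, snoc_init_of_last_zero hlast]
        rw [hv', map_sub, map_smul, hqB, smul_zero, sub_zero, hv]
      exact IH P (q.comp (snocLin S n)) hq₂surj

end Kaplansky

/-- If `Λ` is a complete noetherian local (commutative) ring whose residue field
has characteristic `p > 0`, and `G` is a finite `p`-group, then every finitely
generated projective module over the group algebra `Λ[G]` is free. -/
theorem projective_monoidAlgebra_free (Λ : Type u) [CommRing Λ] [IsLocalRing Λ]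
    [IsNoetherianRing Λ] [IsAdicComplete (IsLocalRing.maximalIdeal Λ) Λ]
    (p : ℕ) [Fact p.Prime] [CharP (IsLocalRing.ResidueField Λ) p]
    (G : Type u) [Group G] [Finite G] (hG : IsPGroup p G)
    (P : Type v) [AddCommGroup P] [Module (MonoidAlgebra Λ G) P]
    [Module.Finite (MonoidAlgebra Λ G) P] [Module.Projective (MonoidAlgebra Λ G) P] :
    Module.Free (MonoidAlgebra Λ G) P := by
  have hS : ∀ a : MonoidAlgebra Λ G, IsUnit a ∨ IsUnit (1 - a) := by
    intro a
    by_cases h : aug a ∈ IsLocalRing.maximalIdeal Λ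
    · exact Or.inr (isUnit_one_sub_of_aug_mem p hG h)
    · exact Or.inl (isUnit_of_aug_not_mem p hG h)
  obtain ⟨n, q, hq⟩ := Module.Finite.exists_fin' (MonoidAlgebra Λ G) P
  exact free_of_surj hS n P q hq
end Aug
end

section
/- Let k be a field and let A be a k-algebra that is smooth over k, i.e. formally smooth and of finite presentation as a k-algebra. Then there exist a subfield k₀ of k that is finitely generated as a field extension of the prime field of k, and a k₀-algebra A₀ that is smooth (formally smooth and of finite presentation) over k₀, together with an isomorphism of k-algebras A ≅ k ⊗_{k₀} A₀. -/
universe u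

open scoped TensorProduct

open scoped Pointwise

open MvPolynomial

set_option synthInstance.maxHeartbeats 1000000
set_option maxHeartbeats 3200000

open MvPolynomial in
/-- Descent of a multivariate polynomial whose coefficients all lie in a subfield. -/
lemma MvPolynomial.exists_descend {k : Type u} [Field k] (k₀ : Subfield k) {n : ℕ}
    (p : MvPolynomial (Fin n) k) (h : ∀ m, p.coeff m ∈ k₀) :
    ∃ p₀ : MvPolynomial (Fin n) k₀, MvPolynomial.map (algebraMap k₀ k) p₀ = p := by
  refine ⟨∑ m ∈ p.support, monomial m (⟨p.coeff m, h m⟩ : k₀), ?_⟩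
  rw [map_sum (MvPolynomial.map (algebraMap k₀ k))]
  simp only [map_monomial]
  conv_rhs => rw [p.as_sum]
  rfl

lemma tensor_quot_equiv {k : Type u} [Field k] (k₀ : Type u) [CommRing k₀] [Algebra k₀ k]
    (P₀ P B : Type u) [CommRing P₀] [Algebra k₀ P₀] [CommRing P] [Algebra k P]
    [CommRing B] [Algebra k B]
    (eT : (k ⊗[k₀] P₀) ≃ₐ[k] P) (I₀ : Ideal P₀) (I : Ideal P)
    (hIJ : I = ((I₀.map (Algebra.TensorProduct.includeRight :
        P₀ →ₐ[k₀] k ⊗[k₀] P₀))).map (eT : (k ⊗[k₀] P₀) →+* P))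
    (eB : B ≃ₐ[k] P ⧸ I) :
    Nonempty (B ≃ₐ[k] k ⊗[k₀] (P₀ ⧸ I₀)) := by
  set fq : P₀ →ₐ[k₀] P₀ ⧸ I₀ := Ideal.Quotient.mkₐ k₀ I₀ with hfq
  have hkerq : RingHom.ker fq = I₀ := Ideal.Quotient.mkₐ_ker k₀ I₀
  have hfqsurj : Function.Surjective fq := Ideal.Quotient.mkₐ_surjective k₀ I₀
  set Φ : k ⊗[k₀] P₀ →ₐ[k] k ⊗[k₀] (P₀ ⧸ I₀) :=
    Algebra.TensorProduct.map (AlgHom.id k k) fq with hΦdef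
  set Φ' : k ⊗[k₀] P₀ →ₐ[k₀] k ⊗[k₀] (P₀ ⧸ I₀) :=
    Algebra.TensorProduct.map (AlgHom.id k₀ k) fq with hΦ'def
  have hΦΦ' : ∀ x, Φ x = Φ' x := by
    intro x
    induction x using TensorProduct.induction_on with
    | zero => simp
    | tmul x y => simp [hΦdef, hΦ'def]
    | add x y hx hy => rw [map_add, map_add, hx, hy]
  have hΦsurj : Function.Surjective Φ := by
    intro x
    induction x using TensorProduct.induction_on with
    | zero => exact ⟨0, map_zero _⟩
    | tmul x y =>
      obtain ⟨p, hp⟩ := hfqsurj y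
      exact ⟨x ⊗ₜ p, by simp [hΦdef, hp]⟩
    | add x y hx hy =>
      obtain ⟨x', rfl⟩ := hx
      obtain ⟨y', rfl⟩ := hy
      exact ⟨x' + y', map_add _ _ _⟩
  have hkerΦ : RingHom.ker Φ.toRingHom = I₀.map
      (Algebra.TensorProduct.includeRight : P₀ →ₐ[k₀] k ⊗[k₀] P₀) := by
    have h1 := Algebra.TensorProduct.lTensor_ker (R := k₀) (A := k) fq hfqsurj
    rw [hkerq] at h1
    ext x
    rw [RingHom.mem_ker, ← h1, RingHom.mem_ker]
    show Φ x = 0 ↔ Φ' x = 0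
    rw [hΦΦ' x]
  have E1 : ((k ⊗[k₀] P₀) ⧸ RingHom.ker Φ.toRingHom) ≃ₐ[k] k ⊗[k₀] (P₀ ⧸ I₀) :=
    Ideal.quotientKerAlgEquivOfSurjective hΦsurj
  have E2 : ((k ⊗[k₀] P₀) ⧸ RingHom.ker Φ.toRingHom) ≃ₐ[k] P ⧸ I :=
    Ideal.quotientEquivAlg (RingHom.ker Φ.toRingHom) I eT (by rw [hIJ, hkerΦ])
  exact ⟨eB.trans (E2.symm.trans E1)⟩

lemma formallySmooth_of_descent {K : Type u} [Field K] {n : ℕ} {ι : Type u}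
    (f₀ : ι → MvPolynomial (Fin n) K) (g₀ : Fin n → MvPolynomial (Fin n) K)
    (I₀ : Ideal (MvPolynomial (Fin n) K)) (hI₀ : I₀ = Ideal.span (Set.range f₀))
    (hm1₀ : ∀ i : Fin n, g₀ i - X i ∈ I₀) (hm2₀ : ∀ j, aeval g₀ (f₀ j) ∈ I₀ ^ 2) :
    Algebra.FormallySmooth K (MvPolynomial (Fin n) K ⧸ I₀) := by
  set fq : (MvPolynomial (Fin n) K) →ₐ[K] (MvPolynomial (Fin n) K) ⧸ I₀ := Ideal.Quotient.mkₐ K I₀ with hfq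
  have hkerq : RingHom.ker fq.toRingHom = I₀ := Ideal.Quotient.mkₐ_ker K I₀
  set τ : (MvPolynomial (Fin n) K) →ₐ[K] (MvPolynomial (Fin n) K) ⧸ (RingHom.ker fq.toRingHom ^ 2) :=
    (Ideal.Quotient.mkₐ K _).comp (aeval g₀) with hτdef
  have hτ : ∀ x ∈ I₀, τ x = 0 := by
    have hle : Ideal.span (Set.range f₀) ≤ RingHom.ker τ.toRingHom := by
      rw [Ideal.span_le]
      rintro _ ⟨j, rfl⟩
      have hz : τ (f₀ j) = 0 := by
        simp only [hτdef, AlgHom.comp_apply, Ideal.Quotient.mkₐ_eq_mk]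
        rw [Ideal.Quotient.eq_zero_iff_mem, hkerq]
        exact hm2₀ j
      exact RingHom.mem_ker.mpr hz
    intro x hx
    exact RingHom.mem_ker.mp (hle (hI₀ ▸ hx))
  set σ₀ : ((MvPolynomial (Fin n) K) ⧸ I₀) →ₐ[K] (MvPolynomial (Fin n) K) ⧸ (RingHom.ker fq.toRingHom ^ 2) :=
    Ideal.Quotient.liftₐ I₀ τ hτ with hσ₀
  have hsplit : fq.kerSquareLift.comp σ₀ = AlgHom.id K ((MvPolynomial (Fin n) K) ⧸ I₀) := by
    apply Ideal.Quotient.algHom_ext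
    apply MvPolynomial.algHom_ext
    intro i
    simp only [AlgHom.comp_apply, AlgHom.id_apply, Ideal.Quotient.mkₐ_eq_mk]
    have h1 : σ₀ (Ideal.Quotient.mk I₀ (X i)) =
        Ideal.Quotient.mk (RingHom.ker fq.toRingHom ^ 2) (g₀ i) := by
      rw [hσ₀, Ideal.Quotient.liftₐ_apply]
      show Ideal.Quotient.mk _ (aeval g₀ (X i)) = _
      rw [MvPolynomial.aeval_X]
    rw [h1]
    have h2 : fq.kerSquareLift (Ideal.Quotient.mk (RingHom.ker fq.toRingHom ^ 2) (g₀ i))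
        = fq (g₀ i) := rfl
    rw [h2, hfq, Ideal.Quotient.mkₐ_eq_mk, Ideal.Quotient.mk_eq_mk_iff_sub_mem]
    exact hm1₀ i
  haveI : Algebra.FormallySmooth K (MvPolynomial (Fin n) K) :=
    Algebra.FormallySmooth.of_equiv
      (MvPolynomial.renameEquiv K (Equiv.ulift.{u} (α := Fin n)))
  exact Algebra.FormallySmooth.of_split fq σ₀ hsplit

/-- Let `k` be a field and `A` a smooth `k`-algebra (formally smooth and of
finite presentation).  Then there is a subfield `k₀` of `k`, finitely generated
as a field over the prime field of `k` (i.e. generated as a subfield of `k` by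
finitely many elements), and a smooth `k₀`-algebra `A₀` with an isomorphism of
`k`-algebras `A ≅ k ⊗_{k₀} A₀`. -/
theorem smooth_algebra_descends (k : Type u) [Field k] (A : Type u) [CommRing A]
    [Algebra k A] [Algebra.Smooth k A] :
    ∃ (k₀ : Subfield k) (A₀ : Type u) (_ : CommRing A₀) (_ : Algebra k₀ A₀),
      (∃ s : Finset k, Subfield.closure (s : Set k) = k₀) ∧
      Algebra.Smooth k₀ A₀ ∧
      Nonempty (A ≃ₐ[k] (k ⊗[k₀] A₀)) := by
  classical
  obtain ⟨n, I, eA, hFG⟩ := Algebra.FinitePresentation.iff.mp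
    (Algebra.Smooth.finitePresentation (R := k) (A := A))
  set P := MvPolynomial (Fin n) k with hP
  obtain ⟨t, ht⟩ := hFG
  haveI : Algebra.FormallySmooth k P :=
    Algebra.FormallySmooth.of_equiv
      (MvPolynomial.renameEquiv k (Equiv.ulift.{u} (α := Fin n)))
  haveI : Algebra.FormallySmooth k (P ⧸ I) :=
    Algebra.FormallySmooth.of_equiv eA.symm
  set f : P →ₐ[k] P ⧸ I := Ideal.Quotient.mkₐ k I with hf
  have hfsurj : Function.Surjective f := Ideal.Quotient.mkₐ_surjective k I
  have hker : RingHom.ker f.toRingHom = I := Ideal.Quotient.mkₐ_ker k I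
  obtain ⟨σ, hσ⟩ := (Algebra.FormallySmooth.iff_split_surjection f hfsurj).mp inferInstance
  -- choose lifts `g i` of `σ (mk (X i))`
  have : ∀ i : Fin n, ∃ p : P,
      Ideal.Quotient.mk (RingHom.ker f.toRingHom ^ 2) p = σ (Ideal.Quotient.mk I (X i)) :=
    fun i => Ideal.Quotient.mk_surjective _
  choose g hg using this
  have hcomp : (Ideal.Quotient.mkₐ k (RingHom.ker f.toRingHom ^ 2)).comp (aeval g)
      = σ.comp f := by
    apply MvPolynomial.algHom_ext
    intro i
    show Ideal.Quotient.mk _ (aeval g (X i)) = σ (Ideal.Quotient.mk I (X i))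
    rw [MvPolynomial.aeval_X]
    exact hg i
  have hmem1 : ∀ i : Fin n, g i - X i ∈ I := by
    intro i
    rw [← Ideal.Quotient.eq_zero_iff_mem, map_sub, sub_eq_zero]
    have : Ideal.Quotient.mk I (g i) = f.kerSquareLift ((Ideal.Quotient.mkₐ k
        (RingHom.ker f.toRingHom ^ 2)) (g i)) := by
      rfl
    rw [this]
    have := hg i
    rw [← Ideal.Quotient.mkₐ_eq_mk k] at this
    rw [this]
    have h3 := AlgHom.congr_fun hσ (Ideal.Quotient.mk I (X i))
    exact h3
  have hmem2 : ∀ p ∈ I, aeval g p ∈ I ^ 2 := by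
    intro p hp
    have h1 : (Ideal.Quotient.mkₐ k (RingHom.ker f.toRingHom ^ 2)) (aeval g p)
        = σ (f p) := by rw [← AlgHom.comp_apply, hcomp]; rfl
    have h2 : f p = 0 := by simpa [hf, Ideal.Quotient.eq_zero_iff_mem] using hp
    rw [h2, map_zero] at h1
    rw [← hker]
    rw [show (Ideal.Quotient.mkₐ k (RingHom.ker f.toRingHom ^ 2)) (aeval g p)
      = Ideal.Quotient.mk (RingHom.ker f.toRingHom ^ 2) (aeval g p) from rfl] at h1
    exact Ideal.Quotient.eq_zero_iff_mem.mp h1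
  -- witnesses for `aeval g (f j) ∈ I ^ 2`
  have hI2 : I ^ 2 = Ideal.span ((↑t : Set P) * (↑t : Set P)) := by
    rw [← ht, pow_two, Ideal.span_mul_span']
  have hw1 : ∀ j : t, ∃ (N : ℕ) (c : Fin N → P)
      (e : Fin N → ((↑t : Set P) * (↑t : Set P) : Set P)),
      ∑ l, c l • (e l : P) = aeval g (j : P) := by
    intro j
    have hj : (j : P) ∈ I := ht ▸ Ideal.subset_span (Finset.mem_coe.mpr j.2)
    have := hmem2 _ hj
    rw [hI2] at this
    exact Submodule.mem_span_set'.mp this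
  choose N c e hce using hw1
  have hprod : ∀ (j : t) (l : Fin (N j)), ∃ a ∈ (↑t : Set P), ∃ b ∈ (↑t : Set P),
      a * b = (e j l : P) := fun j l => Set.mem_mul.mp (e j l).2
  choose a ha b hb hab using hprod
  -- witnesses for `g i - X i ∈ I`
  have hw2 : ∀ i : Fin n, ∃ (M : ℕ) (d : Fin M → P) (e' : Fin M → (↑t : Set P)),
      ∑ l, d l • (e' l : P) = g i - X i := by
    intro i
    have := hmem1 i
    rw [← ht] at this
    exact Submodule.mem_span_set'.mp this
  choose M d e' hde using hw2
  -- the finite set of polynomials we need to descend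
  set U : Finset P := ((t ∪ Finset.image g Finset.univ) ∪
      t.attach.biUnion fun j => Finset.image (c j) Finset.univ) ∪
      Finset.univ.biUnion (fun i : Fin n => Finset.image (d i) Finset.univ) with hU
  have hUt : ∀ p ∈ t, p ∈ U := by
    intro p hp
    simp only [hU, Finset.mem_union]
    exact Or.inl (Or.inl (Or.inl hp))
  have hUg : ∀ i : Fin n, g i ∈ U := by
    intro i
    simp only [hU, Finset.mem_union, Finset.mem_image]
    exact Or.inl (Or.inl (Or.inr ⟨i, Finset.mem_univ i, rfl⟩))
  have hUc : ∀ (j : t) (l : Fin (N j)), c j l ∈ U := by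
    intro j l
    simp only [hU, Finset.mem_union, Finset.mem_biUnion, Finset.mem_image]
    exact Or.inl (Or.inr ⟨j, Finset.mem_attach _ _, l, Finset.mem_univ l, rfl⟩)
  have hUd : ∀ (i : Fin n) (l : Fin (M i)), d i l ∈ U := by
    intro i l
    simp only [hU, Finset.mem_union, Finset.mem_biUnion, Finset.mem_image]
    exact Or.inr ⟨i, Finset.mem_univ i, l, Finset.mem_univ l, rfl⟩
  -- the subfield generated by all coefficients
  set s : Finset k := U.biUnion (fun p => p.support.image fun m => p.coeff m) with hs
  set k₀ : Subfield k := Subfield.closure (s : Set k) with hk₀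
  set P₀ := MvPolynomial (Fin n) k₀ with hP₀
  set ι : P₀ →+* P := MvPolynomial.map (algebraMap k₀ k) with hι
  have hinj : Function.Injective ι :=
    MvPolynomial.map_injective _ (algebraMap k₀ k).injective
  have hιX : ∀ i : Fin n, ι (X i) = X i := fun i =>
    MvPolynomial.map_X (f := algebraMap k₀ k) i
  have hdescend : ∀ p ∈ U, ∃ p₀ : P₀, ι p₀ = p := by
    intro p hp
    refine MvPolynomial.exists_descend k₀ p (fun m => ?_)
    by_cases hm : m ∈ p.support
    · apply Subfield.subset_closure
      simp only [hs, Finset.coe_biUnion, Set.mem_iUnion, Finset.mem_coe]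
      exact ⟨p, hp, Finset.mem_image_of_mem _ hm⟩
    · rw [MvPolynomial.notMem_support_iff.mp hm]
      exact zero_mem k₀
  choose dsc hdsc using hdescend
  set f₀ : t → P₀ := fun j => dsc (j : P) (hUt _ j.2) with hf₀
  set g₀ : Fin n → P₀ := fun i => dsc (g i) (hUg i) with hg₀
  set I₀ : Ideal P₀ := Ideal.span (Set.range f₀) with hI₀
  have hιf₀ : ∀ j : t, ι (f₀ j) = (j : P) := by
    intro j; simp only [hf₀]; exact hdsc _ _
  have hιg₀ : ∀ i, ι (g₀ i) = g i := by
    intro i; simp only [hg₀]; exact hdsc _ _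
  -- `ι` intertwines `aeval g₀` and `aeval g`
  have haeval : ∀ q : P₀, ι (aeval g₀ q) = aeval g (ι q) := by
    intro q
    induction q using MvPolynomial.induction_on with
    | C q =>
      simp only [MvPolynomial.aeval_C, hι]
      rw [show (algebraMap k₀ P₀) q = (C q : P₀) from rfl, MvPolynomial.map_C,
        MvPolynomial.aeval_C, MvPolynomial.algebraMap_eq]
    | add p q hp hq => simp [map_add, hp, hq]
    | mul_X p i hp =>
      have hmul : ι (aeval g₀ (p * X i)) = ι (aeval g₀ p) * ι (g₀ i) := by
        rw [map_mul, map_mul, MvPolynomial.aeval_X]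
      rw [hmul, hp, hιg₀, map_mul, map_mul, hιX, MvPolynomial.aeval_X]
  set d₀ : ∀ i : Fin n, Fin (M i) → P₀ := fun i l => dsc (d i l) (hUd i l) with hd₀
  set E₀ : ∀ i : Fin n, Fin (M i) → P₀ :=
    fun i l => dsc ((e' i l : P)) (hUt _ (Finset.mem_coe.mp (e' i l).2)) with hE₀
  set c₀ : ∀ j : t, Fin (N j) → P₀ := fun j l => dsc (c j l) (hUc j l) with hc₀
  set a₀ : ∀ j : t, Fin (N j) → P₀ :=
    fun j l => dsc (a j l) (hUt _ (Finset.mem_coe.mp (ha j l))) with ha₀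
  set b₀ : ∀ j : t, Fin (N j) → P₀ :=
    fun j l => dsc (b j l) (hUt _ (Finset.mem_coe.mp (hb j l))) with hb₀
  -- transported membership facts
  have hm1₀ : ∀ i : Fin n, g₀ i - X i ∈ I₀ := by
    intro i
    have key : g₀ i - X i = ∑ l, d₀ i l * E₀ i l := by
      apply hinj
      rw [map_sub, hιg₀, map_sum ι]
      simp only [map_mul, hd₀, hE₀, hdsc]
      rw [hιX]
      rw [← hde i]
      simp [smul_eq_mul]
    rw [key]
    refine Ideal.sum_mem _ (fun l _ => Ideal.mul_mem_left _ _ (Ideal.subset_span ?_))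
    exact ⟨⟨(e' i l : P), Finset.mem_coe.mp (e' i l).2⟩, rfl⟩
  have hm2₀ : ∀ j : t, aeval g₀ (f₀ j) ∈ I₀ ^ 2 := by
    intro j
    have key : aeval g₀ (f₀ j) = ∑ l, c₀ j l * (a₀ j l * b₀ j l) := by
      apply hinj
      rw [haeval, hιf₀, map_sum ι]
      simp only [map_mul, hc₀, ha₀, hb₀, hdsc, hab]
      rw [← hce j]
      simp [smul_eq_mul]
    rw [key, pow_two]
    refine Ideal.sum_mem _ (fun l _ => ?_)
    rw [← mul_assoc]
    refine Ideal.mul_mem_mul (Ideal.mul_mem_left _ _ (Ideal.subset_span ?_))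
      (Ideal.subset_span ?_)
    · exact ⟨⟨a j l, Finset.mem_coe.mp (ha j l)⟩, rfl⟩
    · exact ⟨⟨b j l, Finset.mem_coe.mp (hb j l)⟩, rfl⟩
  -- formal smoothness of the descended algebra
  set fq : P₀ →ₐ[k₀] P₀ ⧸ I₀ := Ideal.Quotient.mkₐ k₀ I₀ with hfq
  have hkerq : RingHom.ker fq.toRingHom = I₀ := Ideal.Quotient.mkₐ_ker k₀ I₀
  set τ : P₀ →ₐ[k₀] P₀ ⧸ (RingHom.ker fq.toRingHom ^ 2) :=
    (Ideal.Quotient.mkₐ k₀ _).comp (aeval g₀) with hτdef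
  have hτ : ∀ x ∈ I₀, τ x = 0 := by
    have hle : Ideal.span (Set.range f₀) ≤ RingHom.ker τ.toRingHom := by
      rw [Ideal.span_le]
      rintro _ ⟨j, rfl⟩
      have hz : τ (f₀ j) = 0 := by
        simp only [hτdef, AlgHom.comp_apply, Ideal.Quotient.mkₐ_eq_mk]
        rw [Ideal.Quotient.eq_zero_iff_mem, hkerq]
        exact hm2₀ j
      exact RingHom.mem_ker.mpr hz
    intro x hx
    exact RingHom.mem_ker.mp (hle (hI₀ ▸ hx))
  set σ₀ : (P₀ ⧸ I₀) →ₐ[k₀] P₀ ⧸ (RingHom.ker fq.toRingHom ^ 2) :=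
    Ideal.Quotient.liftₐ I₀ τ hτ with hσ₀
  haveI : Algebra.FormallySmooth k₀ P₀ :=
    Algebra.FormallySmooth.of_equiv
      (MvPolynomial.renameEquiv k₀ (Equiv.ulift.{u} (α := Fin n)))
  haveI hfs₀ : Algebra.FormallySmooth k₀ (P₀ ⧸ I₀) :=
    formallySmooth_of_descent f₀ g₀ I₀ hI₀ hm1₀ hm2₀
  have hFGI₀ : I₀.FG := by
    refine ⟨t.attach.image f₀, ?_⟩
    have hatt : (↑t.attach : Set {x // x ∈ t}) = Set.univ := by ext x; simp
    rw [Finset.coe_image, hatt, Set.image_univ, hI₀]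
  haveI hfp₀ : Algebra.FinitePresentation k₀ (P₀ ⧸ I₀) :=
    Algebra.FinitePresentation.quotient hFGI₀
  -- the base change isomorphism
  set eT : (k ⊗[k₀] P₀) ≃ₐ[k] P :=
    MvPolynomial.algebraTensorAlgEquiv (R := k₀) (A := k) with heT
  have hmapI : I₀.map ι = I := by
    rw [hI₀, Ideal.map_span, ← ht]
    congr 1
    rw [← Set.range_comp]
    have h2 : (⇑ι ∘ f₀) = fun j : t => (j : P) := funext hιf₀
    rw [h2]
    ext x
    simp
  have hcompRH : ((eT : (k ⊗[k₀] P₀) →+* P)).comp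
      ((Algebra.TensorProduct.includeRight : P₀ →ₐ[k₀] k ⊗[k₀] P₀) :
        P₀ →+* k ⊗[k₀] P₀) = ι := by
    refine RingHom.ext fun p => ?_
    show eT ((1 : k) ⊗ₜ p) = ι p
    rw [heT, MvPolynomial.algebraTensorAlgEquiv_tmul, one_smul, hι]
  have hIJ : I = ((I₀.map (Algebra.TensorProduct.includeRight :
      P₀ →ₐ[k₀] k ⊗[k₀] P₀))).map (eT : (k ⊗[k₀] P₀) →+* P) := by
    rw [show (I₀.map (Algebra.TensorProduct.includeRight : P₀ →ₐ[k₀] k ⊗[k₀] P₀))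
      = I₀.map ((Algebra.TensorProduct.includeRight : P₀ →ₐ[k₀] k ⊗[k₀] P₀) :
        P₀ →+* k ⊗[k₀] P₀) from rfl]
    rw [Ideal.map_map, hcompRH, hmapI]
  obtain ⟨E⟩ := tensor_quot_equiv k₀ P₀ P A eT I₀ I hIJ eA.symm
  exact ⟨k₀, P₀ ⧸ I₀, inferInstance, inferInstance, ⟨s, rfl⟩, ⟨hfs₀, hfp₀⟩, ⟨E⟩⟩
end
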